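/- arXiv:2512.08114 — 4 statements merged into one kernel-verified Lean document; each statement's English description precedes it below -/
import Mathlib

section
/- Let K, L be compact Hausdorff spaces, 𝕜 ∈ {ℝ, ℂ}, and let T : C(L) → C(K) be a bounded linear operator with the property that for every t ∈ L there exists s_t ∈ K such that Tf(s_t) = f(t) for every f ∈ C(L). Then, for every subspace E of C(L) that does SPR, the image T(E) is a subspace of C(K) that does SPR. -/
open scoped ZeroAtInfty

noncomputable section

/-- The pointwise modulus of a continuous function, as a real-valued continuous function. -/
def cmAbs {K : Type*} [TopologicalSpace K] {𝕜 : Type*} [RCLike 𝕜]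
    (f : C(K, 𝕜)) : C(K, ℝ) :=
  ⟨fun x => ‖f x‖, (map_continuous f).norm⟩

/-- `inf_{‖λ‖ = 1} ‖f - λ • g‖`. -/
def sprInf {K : Type*} [TopologicalSpace K] [CompactSpace K] {𝕜 : Type*} [RCLike 𝕜]
    (f g : C(K, 𝕜)) : ℝ :=
  ⨅ l : {c : 𝕜 // ‖c‖ = 1}, ‖f - (l : 𝕜) • g‖

/-- A subspace `E ⊆ C(K, 𝕜)` does `C`-stable phase retrieval. -/
def DoesCSPR {K : Type*} [TopologicalSpace K] [CompactSpace K] {𝕜 : Type*} [RCLike 𝕜]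
    (E : Submodule 𝕜 C(K, 𝕜)) (C : ℝ) : Prop :=
  ∀ f ∈ E, ∀ g ∈ E, sprInf f g ≤ C * ‖cmAbs f - cmAbs g‖

/-- A subspace `E ⊆ C(K, 𝕜)` does stable phase retrieval. -/
def DoesSPR {K : Type*} [TopologicalSpace K] [CompactSpace K] {𝕜 : Type*} [RCLike 𝕜]
    (E : Submodule 𝕜 C(K, 𝕜)) : Prop :=
  ∃ C : ℝ, 1 ≤ C ∧ DoesCSPR E C
/-- Let `K, L` be compact Hausdorff spaces, `𝕜 ∈ {ℝ, ℂ}`, and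
`T : C(L) → C(K)` a bounded linear operator such that for every `t ∈ L` there is `s_t ∈ K` with
`Tf s_t = f t` for all `f`. Then `T` maps SPR subspaces of `C(L)` to SPR subspaces of `C(K)`. -/
theorem pointwise_section_preserves_SPR {𝕜 : Type*} [RCLike 𝕜]
    {K L : Type*} [TopologicalSpace K] [CompactSpace K] [T2Space K]
    [TopologicalSpace L] [CompactSpace L] [T2Space L]
    (T : C(L, 𝕜) →L[𝕜] C(K, 𝕜))
    (hT : ∀ t : L, ∃ s : K, ∀ f : C(L, 𝕜), T f s = f t)
    (E : Submodule 𝕜 C(L, 𝕜)) (hE : DoesSPR E) :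
    DoesSPR (E.map (T : C(L, 𝕜) →ₗ[𝕜] C(K, 𝕜))) := by
  obtain ⟨C, hC1, hC⟩ := hE
  have hM1 : (1 : ℝ) ≤ max ‖T‖ 1 := le_max_right _ _
  refine ⟨C * max ‖T‖ 1, by nlinarith, ?_⟩
  intro f hf g hg
  obtain ⟨u, hu, rfl⟩ := hf
  obtain ⟨v, hv, rfl⟩ := hg
  have key1 : sprInf ((T : C(L, 𝕜) →ₗ[𝕜] C(K, 𝕜)) u) ((T : C(L, 𝕜) →ₗ[𝕜] C(K, 𝕜)) v)
      ≤ max ‖T‖ 1 * sprInf u v := by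
    rw [sprInf, sprInf, Real.mul_iInf_of_nonneg (le_trans zero_le_one hM1)]
    refine ciInf_mono ⟨0, ?_⟩ fun l => ?_
    · rintro x ⟨l, rfl⟩; positivity
    · calc ‖(T : C(L, 𝕜) →ₗ[𝕜] C(K, 𝕜)) u - (l : 𝕜) • (T : C(L, 𝕜) →ₗ[𝕜] C(K, 𝕜)) v‖
          = ‖T (u - (l : 𝕜) • v)‖ := by rw [map_sub, map_smul]; rfl
        _ ≤ ‖T‖ * ‖u - (l : 𝕜) • v‖ := T.le_opNorm _
        _ ≤ max ‖T‖ 1 * ‖u - (l : 𝕜) • v‖ := by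
            gcongr; exact le_max_left _ _
  have key2 : ‖cmAbs u - cmAbs v‖
      ≤ ‖cmAbs ((T : C(L, 𝕜) →ₗ[𝕜] C(K, 𝕜)) u) - cmAbs ((T : C(L, 𝕜) →ₗ[𝕜] C(K, 𝕜)) v)‖ := by
    rw [ContinuousMap.norm_le _ (norm_nonneg _)]
    intro t
    obtain ⟨s, hs⟩ := hT t
    have : (cmAbs u - cmAbs v) t =
        (cmAbs ((T : C(L, 𝕜) →ₗ[𝕜] C(K, 𝕜)) u) - cmAbs ((T : C(L, 𝕜) →ₗ[𝕜] C(K, 𝕜)) v)) s := by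
      simp [cmAbs, hs u, hs v]
    rw [this]
    exact ContinuousMap.norm_coe_le_norm _ s
  calc sprInf ((T : C(L, 𝕜) →ₗ[𝕜] C(K, 𝕜)) u) ((T : C(L, 𝕜) →ₗ[𝕜] C(K, 𝕜)) v)
      ≤ max ‖T‖ 1 * sprInf u v := key1
    _ ≤ max ‖T‖ 1 * (C * ‖cmAbs u - cmAbs v‖) :=
        mul_le_mul_of_nonneg_left (hC u hu v hv) (le_trans zero_le_one hM1)
    _ ≤ max ‖T‖ 1 * (C * ‖cmAbs ((T : C(L, 𝕜) →ₗ[𝕜] C(K, 𝕜)) u) - cmAbs ((T : C(L, 𝕜) →ₗ[𝕜] C(K, 𝕜)) v)‖) :=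
        mul_le_mul_of_nonneg_left (mul_le_mul_of_nonneg_left key2 (le_trans zero_le_one hC1)) (le_trans zero_le_one hM1)
    _ = C * max ‖T‖ 1 * ‖cmAbs ((T : C(L, 𝕜) →ₗ[𝕜] C(K, 𝕜)) u) - cmAbs ((T : C(L, 𝕜) →ₗ[𝕜] C(K, 𝕜)) v)‖ := by ring

end
end

section
/- Let α < ω₁ be a countable ordinal, let K be a compact Hausdorff space with K^(α) ≠ ∅, and let the scalar field be 𝕜 ∈ {ℝ, ℂ}. Then there exists a linear isometric embedding T : C([1, ω^α]) → C(K) which is positive (if f ≥ 0 pointwise then Tf ≥ 0 pointwise), satisfies T(1) = 1 (T preserves the constant function 1), and has the property that for every t ∈ [1, ω^α] there exists s_t ∈ K with Tf(s_t) = f(t) for every f ∈ C([1, ω^α]). -/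
open scoped ZeroAtInfty

noncomputable section

/-- Ordinal intervals `[a, b]` (with the order topology of the ordinals) are compact spaces. -/
instance ordIccCompact (a b : Ordinal.{0}) : CompactSpace (Set.Icc a b) :=
  isCompact_iff_compactSpace.mp isCompact_Icc

/-- The Cantor–Bendixson derivatives of a topological space: `cbDeriv K 0 = K`,
`cbDeriv K (o+1)` is the derived set (set of accumulation points) of `cbDeriv K o`, and at
limit ordinals one takes intersections. -/
def cbDeriv (K : Type*) [TopologicalSpace K] (o : Ordinal.{0}) : Set K :=
  Ordinal.limitRecOn o Set.univ (fun _ ih => derivedSet ih)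
    (fun o _ ih => ⋂ b : Set.Iio o, ih b b.2)

/-! ### Auxiliary material for the proof -/

namespace NiceEmb

open Ordinal Set Topology Filter

/-! #### Cantor–Bendixson derivative lemmas -/

section CB

variable {K : Type*} [TopologicalSpace K]

theorem cbDeriv_zero : cbDeriv K 0 = Set.univ := Ordinal.limitRecOn_zero ..

theorem cbDeriv_succ (o : Ordinal.{0}) :
    cbDeriv K (Order.succ o) = derivedSet (cbDeriv K o) := Ordinal.limitRecOn_succ ..

theorem cbDeriv_limit (o : Ordinal.{0}) (h : Order.IsSuccLimit o) :
    cbDeriv K o = ⋂ b : Set.Iio o, cbDeriv K b := Ordinal.limitRecOn_limit _ _ _ _ h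

theorem isClosed_cbDeriv [T1Space K] (o : Ordinal.{0}) : IsClosed (cbDeriv K o) := by
  induction o using Ordinal.induction with
  | _ o IH =>
    rcases Ordinal.zero_or_succ_or_isSuccLimit o with h | ⟨a, rfl⟩ | h
    · rw [h, cbDeriv_zero]; exact isClosed_univ
    · rw [cbDeriv_succ]; exact isClosed_derivedSet _
    · rw [cbDeriv_limit o h]
      exact isClosed_iInter fun b => IH b b.2

theorem cbDeriv_anti [T1Space K] : ∀ o₂ o₁ : Ordinal.{0}, o₁ ≤ o₂ →
    cbDeriv K o₂ ⊆ cbDeriv K o₁ := by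
  intro o₂
  induction o₂ using Ordinal.induction with
  | _ o₂ IH =>
    intro o₁ h
    rcases eq_or_lt_of_le h with rfl | hlt
    · exact subset_rfl
    rcases Ordinal.zero_or_succ_or_isSuccLimit o₂ with h0 | ⟨a, rfl⟩ | hl
    · exact absurd hlt (by simp [h0])
    · have h1 : o₁ ≤ a := Order.lt_succ_iff.mp hlt
      rw [cbDeriv_succ]
      refine subset_trans ?_ (IH a (Order.lt_succ a) o₁ h1)
      exact (derivedSet_subset_closure _).trans (isClosed_cbDeriv a).closure_subset
    · rw [cbDeriv_limit o₂ hl]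
      exact Set.iInter_subset (fun b : Set.Iio o₂ => cbDeriv K b) ⟨o₁, hlt⟩

theorem mem_derivedSet_of_mem_cbDeriv [T1Space K] {s : K} {α β : Ordinal.{0}}
    (hβ : β < α) (hs : s ∈ cbDeriv K α) : s ∈ derivedSet (cbDeriv K β) := by
  rw [← cbDeriv_succ]
  exact cbDeriv_anti α (Order.succ β) (Order.succ_le_of_lt hβ) hs

end CB

/-! #### Ordinal block sequences -/

/-- Partial sums of `ω ^ g i`. -/
def gam (g : ℕ → Ordinal.{0}) : ℕ → Ordinal.{0}
  | 0 => 0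
  | n + 1 => gam g n + Ordinal.omega0 ^ g n

theorem gam_lt {α : Ordinal.{0}} {g : ℕ → Ordinal.{0}} (hg : ∀ n, g n < α) (n : ℕ) :
    gam g n < Ordinal.omega0 ^ α := by
  induction n with
  | zero => exact Ordinal.opow_pos α Ordinal.omega0_pos
  | succ n IH =>
    exact Ordinal.principal_add_omega0_opow α IH
      ((Ordinal.opow_lt_opow_iff_right Ordinal.one_lt_omega0).2 (hg n))

theorem gam_strictMono (g : ℕ → Ordinal.{0}) : StrictMono (gam g) := by
  apply strictMono_nat_of_lt_succ
  intro n
  show gam g n < gam g n + _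
  simpa using Ordinal.opow_pos (g n) Ordinal.omega0_pos

theorem gam_succ_le {α : Ordinal.{0}} {g : ℕ → Ordinal.{0}} (hg : ∀ n, g n < α) (n : ℕ) :
    gam g n + Ordinal.omega0 ^ g n ≤ Ordinal.omega0 ^ α :=
  (gam_lt hg (n + 1)).le

/-- Existence of a suitable block sequence. -/
theorem exists_blockSeq {α : Ordinal.{0}} (h0 : α ≠ 0) (hα : α.card ≤ Cardinal.aleph0) :
    ∃ g : ℕ → Ordinal.{0}, (∀ n, g n < α) ∧
      ∀ δ < Ordinal.omega0 ^ α, ∃ n, δ < gam g n := by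
  rcases Ordinal.zero_or_succ_or_isSuccLimit α with h | ⟨β, rfl⟩ | hl
  · exact absurd h h0
  · refine ⟨fun _ => β, fun _ => Order.lt_succ β, fun δ hδ => ?_⟩
    have hga : ∀ n : ℕ, gam (fun _ => β) n = Ordinal.omega0 ^ β * n := by
      intro n
      induction n with
      | zero => simp [gam]
      | succ n IH =>
        show gam _ n + _ = _
        rw [IH, Nat.cast_succ, mul_add_one]
    rw [Order.succ_eq_add_one, Ordinal.opow_add, Ordinal.opow_one] at hδ
    obtain ⟨c, hc, hδc⟩ := (Ordinal.lt_mul_iff_of_isSuccLimit Ordinal.isSuccLimit_omega0).1 hδ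
    obtain ⟨n, rfl⟩ := Ordinal.lt_omega0.1 hc
    exact ⟨n, by rw [hga n]; exact hδc⟩
  · have hcount : (Set.Iio α).Countable := by
      rw [← Cardinal.le_aleph0_iff_set_countable, Ordinal.mk_Iio_ordinal]
      exact Cardinal.lift_le_aleph0.2 hα
    obtain ⟨g, hg⟩ := hcount.exists_eq_range ⟨0, pos_iff_ne_zero.2 h0⟩
    have hglt : ∀ n, g n < α := fun n => by
      have : g n ∈ Set.Iio α := hg ▸ Set.mem_range_self n
      exact this
    refine ⟨g, hglt, fun δ hδ => ?_⟩
    obtain ⟨c, hc, hδc⟩ := (Ordinal.lt_opow_of_isSuccLimit Ordinal.omega0_ne_zero hl).1 hδ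
    have : c ∈ Set.range g := hg ▸ hc
    obtain ⟨n, rfl⟩ := this
    exact ⟨n + 1, hδc.trans_le (le_add_self)⟩

theorem exists_block {α : Ordinal.{0}} {g : ℕ → Ordinal.{0}}
    (hsup : ∀ δ < Ordinal.omega0 ^ α, ∃ n, δ < gam g n)
    {t : Ordinal.{0}} (h1 : 1 ≤ t) (ht : t < Ordinal.omega0 ^ α) :
    ∃ n u, 1 ≤ u ∧ u ≤ Ordinal.omega0 ^ g n ∧ gam g n + u = t := by
  have hex : ∃ m, t ≤ gam g m := by
    obtain ⟨m, hm⟩ := hsup t ht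
    exact ⟨m, hm.le⟩
  classical
  have hm : t ≤ gam g (Nat.find hex) := Nat.find_spec hex
  obtain ⟨n, hn⟩ : ∃ n, Nat.find hex = n + 1 := by
    cases h : Nat.find hex with
    | zero =>
      rw [h] at hm
      simp only [gam] at hm
      exact absurd (h1.trans hm) (by simp)
    | succ n => exact ⟨n, rfl⟩
  rw [hn] at hm
  have hlt : gam g n < t := by
    by_contra hc
    exact Nat.find_min hex (m := n) (by omega) (not_lt.1 hc)
  refine ⟨n, t - gam g n, ?_, ?_, Ordinal.add_sub_cancel_of_le hlt.le⟩
  · rw [Ordinal.one_le_iff_ne_zero]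
    intro h
    rw [Ordinal.sub_eq_zero_iff_le] at h
    exact absurd h (not_le.2 hlt)
  · rw [Ordinal.sub_le]
    exact hm

/-! #### The interval `[1, ω ^ α]` and restriction to blocks -/

/-- The top point of `[1, ω ^ α]`. -/
def topPt (α : Ordinal.{0}) : Set.Icc (1 : Ordinal.{0}) (Ordinal.omega0 ^ α) :=
  ⟨Ordinal.omega0 ^ α, Order.one_le_iff_pos.2 (Ordinal.opow_pos α Ordinal.omega0_pos), le_rfl⟩

theorem tail_small {𝕜 : Type*} [RCLike 𝕜] {α : Ordinal.{0}}
    (hT : Order.IsSuccLimit (Ordinal.omega0 ^ α))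
    (f : C(Set.Icc (1 : Ordinal.{0}) (Ordinal.omega0 ^ α), 𝕜)) {ε : ℝ} (hε : 0 < ε) :
    ∃ c < Ordinal.omega0 ^ α, ∀ x : Set.Icc (1 : Ordinal.{0}) (Ordinal.omega0 ^ α),
      c < x.1 → ‖f x - f (topPt α)‖ ≤ ε := by
  have hcont : ContinuousAt f (topPt α) := f.continuous.continuousAt
  have hmem : {x : Set.Icc (1 : Ordinal.{0}) (Ordinal.omega0 ^ α) | ‖f x - f (topPt α)‖ < ε}
      ∈ 𝓝 (topPt α) := by
    have h1 : Metric.ball (f (topPt α)) ε ∈ 𝓝 (f (topPt α)) := Metric.ball_mem_nhds _ hε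
    refine Filter.mem_of_superset (hcont.preimage_mem_nhds h1) ?_
    intro x hx
    simpa [dist_eq_norm] using hx
  rw [nhds_subtype] at hmem
  obtain ⟨O, hO, hOsub⟩ := hmem
  obtain ⟨c, hc, hIoc⟩ := exists_Ioc_subset_of_mem_nhds' hO hT.pos
  refine ⟨c, hc.2, fun x hx => ?_⟩
  have hxO : (x : Ordinal) ∈ O := hIoc ⟨hx, x.2.2⟩
  exact (hOsub hxO).le

/-- The continuous map `u ↦ γ + u` from `[1, δ]` into `[1, T]`, when `γ + δ ≤ T`. -/
def blockMap (T γ δ : Ordinal.{0}) (h : γ + δ ≤ T) :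
    C(Set.Icc (1 : Ordinal.{0}) δ, Set.Icc (1 : Ordinal.{0}) T) where
  toFun u := ⟨γ + u.1, le_trans u.2.1 (le_add_self),
    le_trans (add_le_add_right u.2.2 γ) h⟩
  continuous_toFun := by
    apply Continuous.subtype_mk
    exact (((Order.isNormal_iff_strictMono_and_continuous).1
      (Ordinal.isNormal_add_right γ)).2).comp continuous_subtype_val

variable {𝕜 : Type*} [RCLike 𝕜]

/-- Restriction of a continuous function on `[1, ω ^ α]` to the `n`-th block. -/
def resL (α : Ordinal.{0}) (g : ℕ → Ordinal.{0}) (hg : ∀ n, g n < α) (n : ℕ) :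
    C(Set.Icc (1 : Ordinal.{0}) (Ordinal.omega0 ^ α), 𝕜) →ₐ[𝕜]
      C(Set.Icc (1 : Ordinal.{0}) (Ordinal.omega0 ^ g n), 𝕜) :=
  ContinuousMap.compRightAlgHom 𝕜 𝕜
    (blockMap (Ordinal.omega0 ^ α) (gam g n) (Ordinal.omega0 ^ g n) (gam_succ_le hg n))

theorem resL_apply (α : Ordinal.{0}) (g : ℕ → Ordinal.{0}) (hg : ∀ n, g n < α) (n : ℕ)
    (f : C(Set.Icc (1 : Ordinal.{0}) (Ordinal.omega0 ^ α), 𝕜))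
    (u : Set.Icc (1 : Ordinal.{0}) (Ordinal.omega0 ^ g n)) :
    resL α g hg n f u =
      f ⟨gam g n + u.1, le_trans u.2.1 (le_add_self),
        le_trans (add_le_add_right u.2.2 _) (gam_succ_le hg n)⟩ := rfl

theorem resL_norm_le (α : Ordinal.{0}) (g : ℕ → Ordinal.{0}) (hg : ∀ n, g n < α) (n : ℕ)
    (f : C(Set.Icc (1 : Ordinal.{0}) (Ordinal.omega0 ^ α), 𝕜)) (c : 𝕜) :
    ‖resL α g hg n f - c • 1‖ ≤ ‖f - c • 1‖ := by
  refine (ContinuousMap.norm_le _ (norm_nonneg _)).2 fun u => ?_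
  have h1 : (resL α g hg n f - c • 1) u
      = (f - c • 1) (blockMap _ (gam g n) _ (gam_succ_le hg n) u) := by
    simp [resL_apply, blockMap, ContinuousMap.compRightAlgHom]
  rw [h1]
  exact ContinuousMap.norm_coe_le_norm _ _

/-! #### The gluing construction -/

section Glue

variable {K : Type*} [TopologicalSpace K] [CompactSpace K] [T2Space K]
variable (α : Ordinal.{0}) (g : ℕ → Ordinal.{0}) (hg : ∀ n, g n < α)
variable (φ : ℕ → C(K, ℝ))
variable (Tn : ∀ n, C(Set.Icc (1 : Ordinal.{0}) (Ordinal.omega0 ^ g n), 𝕜) →ₗ[𝕜] C(K, 𝕜))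

/-- One block of the glued operator. -/
def hAux (n : ℕ) (f : C(Set.Icc (1 : Ordinal.{0}) (Ordinal.omega0 ^ α), 𝕜)) : C(K, 𝕜) :=
  φ n • (Tn n (resL α g hg n f) - f (topPt α) • 1)

theorem hAux_apply (n : ℕ) (f : C(Set.Icc (1 : Ordinal.{0}) (Ordinal.omega0 ^ α), 𝕜)) (x : K) :
    hAux α g hg φ Tn n f x = φ n x • (Tn n (resL α g hg n f) x - f (topPt α)) := by
  simp [hAux]

theorem hAux_add (n : ℕ) (f₁ f₂ : C(Set.Icc (1 : Ordinal.{0}) (Ordinal.omega0 ^ α), 𝕜)) :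
    hAux α g hg φ Tn n (f₁ + f₂) = hAux α g hg φ Tn n f₁ + hAux α g hg φ Tn n f₂ := by
  ext x
  simp only [hAux_apply, ContinuousMap.add_apply, map_add]
  rw [← smul_add]
  congr 1
  ring

theorem hAux_smul (n : ℕ) (c : 𝕜) (f : C(Set.Icc (1 : Ordinal.{0}) (Ordinal.omega0 ^ α), 𝕜)) :
    hAux α g hg φ Tn n (c • f) = c • hAux α g hg φ Tn n f := by
  ext x
  simp only [hAux_apply, map_smul, ContinuousMap.smul_apply]
  rw [← smul_sub, smul_comm]

theorem hAux_eq_zero (n : ℕ) (f : C(Set.Icc (1 : Ordinal.{0}) (Ordinal.omega0 ^ α), 𝕜)) (x : K)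
    (hx : φ n x = 0) : hAux α g hg φ Tn n f x = 0 := by
  rw [hAux_apply, hx, zero_smul]

theorem hAux_norm (n : ℕ) (f : C(Set.Icc (1 : Ordinal.{0}) (Ordinal.omega0 ^ α), 𝕜)) (x : K)
    (hφ : ∀ y, φ n y ∈ Set.Icc (0 : ℝ) 1)
    (hTn : ∀ (h : C(Set.Icc (1 : Ordinal.{0}) (Ordinal.omega0 ^ g n), 𝕜)) (c : 𝕜),
      ‖Tn n h - c • 1‖ ≤ ‖h - c • 1‖) :
    ‖hAux α g hg φ Tn n f x‖ ≤ ‖resL α g hg n f - f (topPt α) • 1‖ := by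
  rw [hAux_apply, norm_smul]
  have h1 : ‖Tn n (resL α g hg n f) x - f (topPt α)‖
      ≤ ‖Tn n (resL α g hg n f) - f (topPt α) • 1‖ := by
    have := ContinuousMap.norm_coe_le_norm (Tn n (resL α g hg n f) - f (topPt α) • 1) x
    simpa using this
  have h2 : ‖φ n x‖ ≤ 1 := by
    rw [Real.norm_eq_abs, abs_le]
    constructor <;> linarith [(hφ x).1, (hφ x).2]
  calc ‖φ n x‖ * ‖Tn n (resL α g hg n f) x - f (topPt α)‖
      ≤ 1 * ‖Tn n (resL α g hg n f) - f (topPt α) • 1‖ := by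
        apply mul_le_mul h2 (h1.trans (le_refl _)) (norm_nonneg _) zero_le_one
    _ = ‖Tn n (resL α g hg n f) - f (topPt α) • 1‖ := one_mul _
    _ ≤ _ := hTn _ _

/-- On a finite set, the sum of blocks is controlled by the max block bound,
thanks to disjointness of supports. -/
theorem sum_hAux_norm_le (V : ℕ → Set K)
    (hφ0 : ∀ n, Set.EqOn (φ n) 0 (V n)ᶜ)
    (hVd : ∀ m n, m ≠ n → Disjoint (V m) (V n))
    (hφ01 : ∀ n y, φ n y ∈ Set.Icc (0 : ℝ) 1)
    (hTnn : ∀ n (h : C(Set.Icc (1 : Ordinal.{0}) (Ordinal.omega0 ^ g n), 𝕜)) (c : 𝕜),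
      ‖Tn n h - c • 1‖ ≤ ‖h - c • 1‖)
    (F : Finset ℕ) (f : C(Set.Icc (1 : Ordinal.{0}) (Ordinal.omega0 ^ α), 𝕜))
    {ε : ℝ} (hε : 0 ≤ ε)
    (hb : ∀ n ∈ F, ‖resL α g hg n f - f (topPt α) • 1‖ ≤ ε) :
    ‖∑ n ∈ F, hAux α g hg φ Tn n f‖ ≤ ε := by
  classical
  refine (ContinuousMap.norm_le _ hε).2 fun x => ?_
  rw [ContinuousMap.sum_apply]
  by_cases hx : ∃ m ∈ F, x ∈ V m
  · obtain ⟨m, hmF, hxm⟩ := hx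
    rw [Finset.sum_eq_single_of_mem m hmF (fun n _ hne => hAux_eq_zero α g hg φ Tn n f x
      (hφ0 n (fun hxn => Set.disjoint_left.1 (hVd n m hne) hxn hxm)))]
    exact (hAux_norm α g hg φ Tn m f x (hφ01 m) (hTnn m)).trans (hb m hmF)
  · push_neg at hx
    rw [Finset.sum_eq_zero (fun n hn => hAux_eq_zero α g hg φ Tn n f x (hφ0 n (hx n hn)))]
    simpa using hε

end Glue

/-! #### Choosing points and disjoint neighborhoods -/

section Points

variable {K : Type*} [TopologicalSpace K] [CompactSpace K] [T2Space K]

theorem step_lemma {s : K} {W : Set K} (hW : IsOpen W) (hsW : s ∈ W) {A : Set K}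
    (hs : s ∈ derivedSet A) :
    ∃ x V, x ∈ A ∧ x ∈ V ∧ IsOpen V ∧ closure V ⊆ W ∧ s ∉ closure V := by
  obtain ⟨x, hxW, hxA⟩ : ∃ y, y ∈ W ∩ A ∧ y ≠ s := by
    obtain ⟨y, hy, hyne⟩ := (accPt_iff_nhds).1 hs W (hW.mem_nhds hsW)
    exact ⟨y, hy, hyne⟩
  have hopen : IsOpen (W \ {s}) := hW.sdiff isClosed_singleton
  have hxmem : x ∈ W \ {s} := ⟨hxW.1, hxA⟩
  obtain ⟨t, htn, htc, hts⟩ := exists_mem_nhds_isClosed_subset (hopen.mem_nhds hxmem)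
  refine ⟨x, interior t, hxW.2, mem_interior_iff_mem_nhds.2 htn, isOpen_interior, ?_, ?_⟩
  · calc closure (interior t) ⊆ closure t := closure_mono interior_subset
    _ = t := htc.closure_eq
    _ ⊆ W := hts.trans diff_subset
  · intro hcl
    have : s ∈ t := htc.closure_eq ▸ (closure_mono interior_subset hcl)
    exact (hts this).2 rfl

/-- Iterated choice of points and disjoint neighborhoods. -/
theorem exists_pointSeq (s : K) (U : Set K) (hU : IsOpen U) (hsU : s ∈ U)
    (A : ℕ → Set K) (hA : ∀ n, s ∈ derivedSet (A n)) :
    ∃ (x : ℕ → K) (V : ℕ → Set K),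
      (∀ n, x n ∈ A n) ∧ (∀ n, x n ∈ V n) ∧ (∀ n, IsOpen (V n)) ∧
      (∀ n, closure (V n) ⊆ U) ∧ (∀ n, s ∉ closure (V n)) ∧
      (∀ m n, m ≠ n → Disjoint (V m) (V n)) := by
  classical
  -- state type
  let St := {W : Set K // IsOpen W ∧ s ∈ W}
  have hstep : ∀ (n : ℕ) (W : St), ∃ p : K × Set K,
      p.1 ∈ A n ∧ p.1 ∈ p.2 ∧ IsOpen p.2 ∧ closure p.2 ⊆ W.1 ∧ s ∉ closure p.2 := by
    rintro n ⟨W, hWo, hWs⟩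
    obtain ⟨x, V, h⟩ := step_lemma hWo hWs (hA n)
    exact ⟨(x, V), h⟩
  choose F hF1 hF2 hF3 hF4 hF5 using hstep
  let next : ℕ → St → St := fun n W =>
    ⟨W.1 ∩ (closure (F n W).2)ᶜ, W.2.1.inter (isClosed_closure).isOpen_compl,
      ⟨W.2.2, hF5 n W⟩⟩
  let Ws : ℕ → St := fun n => Nat.rec (⟨U, hU, hsU⟩ : St) (fun n W => next n W) n
  have hWs_succ : ∀ n, (Ws (n+1)).1 = (Ws n).1 ∩ (closure (F n (Ws n)).2)ᶜ := fun n => rfl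
  have hWs_anti : ∀ m n, m ≤ n → (Ws n).1 ⊆ (Ws m).1 := by
    intro m n h
    induction n with
    | zero => cases Nat.le_zero.1 h; exact subset_rfl
    | succ n IH =>
      rcases Nat.lt_or_ge m (n+1) with h' | h'
      · exact (Set.inter_subset_left).trans (IH (by omega))
      · cases le_antisymm h h'; exact subset_rfl
  have hWsU : ∀ n, (Ws n).1 ⊆ U := fun n => hWs_anti 0 n (Nat.zero_le n)
  refine ⟨fun n => (F n (Ws n)).1, fun n => (F n (Ws n)).2,
    fun n => hF1 n (Ws n), fun n => hF2 n (Ws n), fun n => hF3 n (Ws n),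
    fun n => (hF4 n (Ws n)).trans (hWsU n), fun n => hF5 n (Ws n), ?_⟩
  have key : ∀ m n, m < n → Disjoint (F m (Ws m)).2 (F n (Ws n)).2 := by
    intro m n h
    have h1 : (F n (Ws n)).2 ⊆ (Ws (m+1)).1 :=
      (subset_closure.trans (hF4 n (Ws n))).trans (hWs_anti (m+1) n h)
    have h2 : (Ws (m+1)).1 ⊆ (closure (F m (Ws m)).2)ᶜ := by
      rw [hWs_succ m]; exact Set.inter_subset_right
    refine Set.disjoint_left.2 fun x hxm hxn => ?_
    exact (h2 (h1 hxn)) (subset_closure hxm)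
  intro m n hmn
  rcases Nat.lt_or_ge m n with h | h
  · exact key m n h
  · exact (key n m (by omega)).symm


end Points

/-! #### The main inductive construction -/

set_option maxHeartbeats 1000000 in
theorem key {K : Type*} [TopologicalSpace K] [CompactSpace K] [T2Space K] :
    ∀ α : Ordinal.{0}, α.card ≤ Cardinal.aleph0 → ∀ s : K, s ∈ cbDeriv K α →
      ∀ U : Set K, IsOpen U → s ∈ U →
      ∃ T : C(Set.Icc (1 : Ordinal.{0}) (Ordinal.omega0 ^ α), 𝕜) →ₗ[𝕜] C(K, 𝕜),
        T 1 = 1 ∧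
        (∀ f (c : 𝕜), ‖T f - c • 1‖ ≤ ‖f - c • 1‖) ∧
        (∀ f, (∀ t, ∃ r : ℝ, 0 ≤ r ∧ f t = algebraMap ℝ 𝕜 r) →
          ∀ x : K, ∃ r : ℝ, 0 ≤ r ∧ T f x = algebraMap ℝ 𝕜 r) ∧
        (∀ t, ∃ x ∈ U, ∀ f, T f x = f t) := by
  intro α
  induction α using Ordinal.induction with
  | _ α IH =>
    intro hα s hs U hU hsU
    rcases eq_or_ne α 0 with rfl | h0
    · -- base case : the interval is a single point
      have hmem : (1 : Ordinal.{0}) ∈ Set.Icc (1 : Ordinal.{0}) (Ordinal.omega0 ^ (0:Ordinal)) := by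
        simp
      set pt : Set.Icc (1 : Ordinal.{0}) (Ordinal.omega0 ^ (0:Ordinal)) := ⟨1, hmem⟩ with hpt
      let T : C(Set.Icc (1 : Ordinal.{0}) (Ordinal.omega0 ^ (0:Ordinal)), 𝕜) →ₗ[𝕜] C(K, 𝕜) :=
        { toFun := fun f => f pt • 1
          map_add' := fun f₁ f₂ => by simp [add_smul]
          map_smul' := fun c f => by simp [mul_smul] }
      have hTf : ∀ f, T f = f pt • 1 := fun _ => rfl
      refine ⟨T, ?_, ?_, ?_, ?_⟩
      · rw [hTf]; simp
      · intro f c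
        rw [hTf]
        refine (ContinuousMap.norm_le _ (norm_nonneg _)).2 fun x => ?_
        have h1 : (f pt • (1:C(K,𝕜)) - c • 1) x = (f - c • 1) pt := by simp
        rw [h1]
        exact ContinuousMap.norm_coe_le_norm _ _
      · intro f hf x
        rw [hTf]
        simpa using hf pt
      · intro t
        have ht : t = pt := by
          refine Subtype.ext (le_antisymm ?_ t.2.1)
          have := t.2.2
          exact (by simpa using this : (t : Ordinal) ≤ 1)
        refine ⟨s, hsU, fun f => ?_⟩
        rw [hTf, ht]
        simp
    · -- main case: `α ≠ 0`
      have hTlim : Order.IsSuccLimit (Ordinal.omega0 ^ α) :=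
        Ordinal.isSuccLimit_opow_left Ordinal.isSuccLimit_omega0 h0
      obtain ⟨g, hg, hsup⟩ := exists_blockSeq h0 hα
      have hacc : ∀ n, s ∈ derivedSet (cbDeriv K (g n)) := fun n =>
        mem_derivedSet_of_mem_cbDeriv (hg n) hs
      obtain ⟨sn, V, hsnA, hsnV, hVo, hVU, hsV, hVd⟩ := exists_pointSeq s U hU hsU _ hacc
      have hshr : ∀ n, ∃ V' : Set K, IsOpen V' ∧ sn n ∈ V' ∧ closure V' ⊆ V n := by
        intro n
        obtain ⟨t, htn, htc, hts⟩ := exists_mem_nhds_isClosed_subset ((hVo n).mem_nhds (hsnV n))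
        refine ⟨interior t, isOpen_interior, mem_interior_iff_mem_nhds.2 htn, ?_⟩
        calc closure (interior t) ⊆ closure t := closure_mono interior_subset
          _ = t := htc.closure_eq
          _ ⊆ V n := hts
      choose V' hV'o hsnV' hV'V using hshr
      have hury : ∀ n, ∃ ψ : C(K, ℝ), Set.EqOn ψ 0 (V n)ᶜ ∧ Set.EqOn ψ 1 (closure (V' n)) ∧
          ∀ x, ψ x ∈ Set.Icc (0:ℝ) 1 := fun n =>
        exists_continuous_zero_one_of_isClosed (hVo n).isClosed_compl isClosed_closure
          (Set.disjoint_left.2 fun x hx hx2 => hx ((hV'V n) hx2))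
      choose φ hφ0 hφ1 hφ01 using hury
      have hIH : ∀ n, ∃ Tn : C(Set.Icc (1 : Ordinal.{0}) (Ordinal.omega0 ^ g n), 𝕜) →ₗ[𝕜] C(K, 𝕜),
          Tn 1 = 1 ∧ (∀ f (c : 𝕜), ‖Tn f - c • 1‖ ≤ ‖f - c • 1‖) ∧
          (∀ f, (∀ t, ∃ r : ℝ, 0 ≤ r ∧ f t = algebraMap ℝ 𝕜 r) →
            ∀ x : K, ∃ r : ℝ, 0 ≤ r ∧ Tn f x = algebraMap ℝ 𝕜 r) ∧
          (∀ t, ∃ x ∈ V' n, ∀ f, Tn f x = f t) := fun n =>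
        IH (g n) (hg n) ((Ordinal.card_le_card (hg n).le).trans hα) (sn n) (hsnA n)
          (V' n) (hV'o n) (hsnV' n)
      choose Tn hTn1 hTnn hTnp hTne using hIH
      -- tail estimate for the blocks
      have htail : ∀ (f : C(Set.Icc (1 : Ordinal.{0}) (Ordinal.omega0 ^ α), 𝕜)) (ε : ℝ), 0 < ε →
          ∃ N, ∀ n, N ≤ n → ‖resL α g hg n f - f (topPt α) • 1‖ ≤ ε := by
        intro f ε hε
        obtain ⟨c, hc, hcs⟩ := tail_small hTlim f hε
        obtain ⟨N, hN⟩ := hsup c hc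
        refine ⟨N, fun n hn => ?_⟩
        refine (ContinuousMap.norm_le _ hε.le).2 fun u => ?_
        rw [ContinuousMap.sub_apply, resL_apply]
        have h2 : (f (topPt α) • (1 : C(Set.Icc (1 : Ordinal.{0}) (Ordinal.omega0 ^ g n), 𝕜))) u
            = f (topPt α) := by simp
        rw [h2]
        apply hcs
        calc c < gam g N := hN
          _ ≤ gam g n := (gam_strictMono g).monotone hn
          _ < gam g n + u.1 := by
            have hu : (0 : Ordinal) < u.1 := lt_of_lt_of_le zero_lt_one u.2.1
            simpa using (add_lt_add_iff_left (gam g n)).2 hu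
      -- partial sums form a Cauchy sequence
      set S : C(Set.Icc (1 : Ordinal.{0}) (Ordinal.omega0 ^ α), 𝕜) → ℕ → C(K, 𝕜) :=
        fun f N => ∑ n ∈ Finset.range N, hAux α g hg φ Tn n f with hSdef
      have hIcoS : ∀ f M N, M ≤ N →
          S f N - S f M = ∑ n ∈ Finset.Ico M N, hAux α g hg φ Tn n f :=
        fun f M N h => (Finset.sum_Ico_eq_sub _ h).symm
      have hcauchy : ∀ f, CauchySeq (S f) := by
        intro f
        refine Metric.cauchySeq_iff'.2 fun ε hε => ?_
        obtain ⟨N, hN⟩ := htail f (ε/2) (by linarith)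
        refine ⟨N, fun n hn => ?_⟩
        rw [dist_eq_norm, hIcoS f N n hn]
        have hle := sum_hAux_norm_le α g hg φ Tn V hφ0 hVd hφ01 hTnn (Finset.Ico N n) f
          (by linarith : (0:ℝ) ≤ ε/2) (fun m hm => hN m (Finset.mem_Ico.1 hm).1)
        linarith
      have hLex : ∀ f, ∃ Lf, Tendsto (S f) atTop (𝓝 Lf) :=
        fun f => cauchySeq_tendsto_of_complete (hcauchy f)
      choose L hL using hLex
      have hev : ∀ f (x : K), Tendsto (fun N => S f N x) atTop (𝓝 (L f x)) := fun f x =>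
        ((continuous_eval_const x).tendsto (L f)).comp (hL f)
      have hLmem : ∀ f (x : K) m, x ∈ V m → L f x = hAux α g hg φ Tn m f x := by
        intro f x m hxm
        have h1 : ∀ N, m < N → S f N x = hAux α g hg φ Tn m f x := by
          intro N hmN
          simp only [hSdef, ContinuousMap.sum_apply]
          exact Finset.sum_eq_single_of_mem m (Finset.mem_range.2 hmN)
            (fun n _ hne => hAux_eq_zero α g hg φ Tn n f x
              (hφ0 n (fun hxn => Set.disjoint_left.1 (hVd n m hne) hxn hxm)))
        refine tendsto_nhds_unique (hev f x) (Tendsto.congr' ?_ tendsto_const_nhds)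
        filter_upwards [Filter.eventually_ge_atTop (m+1)] with N hN
        exact (h1 N (by omega)).symm
      have hLzero : ∀ f (x : K), (∀ n, x ∉ V n) → L f x = 0 := by
        intro f x hx
        have h1 : ∀ N, S f N x = 0 := by
          intro N
          simp only [hSdef, ContinuousMap.sum_apply]
          exact Finset.sum_eq_zero fun n _ => hAux_eq_zero α g hg φ Tn n f x (hφ0 n (hx n))
        refine tendsto_nhds_unique (hev f x) (Tendsto.congr' ?_ tendsto_const_nhds)
        filter_upwards with N using (h1 N).symm
      have hLadd : ∀ f₁ f₂, L (f₁ + f₂) = L f₁ + L f₂ := by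
        intro f₁ f₂
        have h1 : ∀ N, S (f₁ + f₂) N = S f₁ N + S f₂ N := by
          intro N
          simp only [hSdef, ← Finset.sum_add_distrib]
          exact Finset.sum_congr rfl fun n _ => hAux_add α g hg φ Tn n f₁ f₂
        refine tendsto_nhds_unique (hL (f₁ + f₂)) (Tendsto.congr' ?_ ((hL f₁).add (hL f₂)))
        filter_upwards with N using (h1 N).symm
      have hLsmul : ∀ (c : 𝕜) f, L (c • f) = c • L f := by
        intro c f
        have h1 : ∀ N, S (c • f) N = c • S f N := by
          intro N
          simp only [hSdef, Finset.smul_sum]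
          exact Finset.sum_congr rfl fun n _ => hAux_smul α g hg φ Tn n c f
        refine tendsto_nhds_unique (hL (c • f)) (Tendsto.congr' ?_ ((hL f).const_smul c))
        filter_upwards with N using (h1 N).symm
      -- the glued operator
      let T : C(Set.Icc (1 : Ordinal.{0}) (Ordinal.omega0 ^ α), 𝕜) →ₗ[𝕜] C(K, 𝕜) :=
        { toFun := fun f => f (topPt α) • 1 + L f
          map_add' := fun f₁ f₂ => by
            show ((f₁ + f₂) (topPt α)) • 1 + L (f₁ + f₂) = _
            rw [hLadd, ContinuousMap.add_apply, add_smul]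
            abel_nf
          map_smul' := fun c f => by
            show ((c • f) (topPt α)) • 1 + L (c • f) = _
            rw [hLsmul, ContinuousMap.smul_apply, smul_assoc, ← smul_add]
            rfl }
      have hTf : ∀ f, T f = f (topPt α) • 1 + L f := fun _ => rfl
      have hT1 : T 1 = 1 := by
        rw [hTf]
        have hL1 : L 1 = 0 := by
          ext x
          rcases Classical.em (∃ m, x ∈ V m) with ⟨m, hm⟩ | hx
          · rw [hLmem 1 x m hm, hAux_apply]
            rw [map_one, hTn1 m]
            simp
          · push_neg at hx
            rw [hLzero 1 x hx]
            simp
        rw [hL1]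
        simp
      have hTnorm : ∀ f (c : 𝕜), ‖T f - c • 1‖ ≤ ‖f - c • 1‖ := by
        intro f c
        refine (ContinuousMap.norm_le _ (norm_nonneg _)).2 fun x => ?_
        have hTx : (T f - c • 1) x = (f (topPt α) - c) + L f x := by
          rw [hTf]
          simp only [ContinuousMap.sub_apply, ContinuousMap.add_apply,
            ContinuousMap.smul_apply, ContinuousMap.one_apply, _root_.smul_eq_mul]
          ring
        rw [hTx]
        have htop : ‖f (topPt α) - c‖ ≤ ‖f - c • 1‖ := by
          have h := ContinuousMap.norm_coe_le_norm (f - c • 1) (topPt α)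
          simpa using h
        rcases Classical.em (∃ m, x ∈ V m) with ⟨m, hm⟩ | hx
        · rw [hLmem f x m hm, hAux_apply]
          have hid : (f (topPt α) - c) + φ m x • (Tn m (resL α g hg m f) x - f (topPt α))
              = (1 - φ m x) • (f (topPt α) - c)
                + φ m x • (Tn m (resL α g hg m f) x - c) := by
            rw [Algebra.smul_def, Algebra.smul_def, Algebra.smul_def, map_sub, map_one]
            ring
          rw [hid]
          have h1 : ‖Tn m (resL α g hg m f) x - c‖ ≤ ‖f - c • 1‖ := by
            have h2 : ‖Tn m (resL α g hg m f) x - c‖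
                ≤ ‖Tn m (resL α g hg m f) - c • 1‖ := by
              have h3 := ContinuousMap.norm_coe_le_norm (Tn m (resL α g hg m f) - c • 1) x
              simpa using h3
            exact h2.trans ((hTnn m _ c).trans (resL_norm_le α g hg m f c))
          have hr0 : (0:ℝ) ≤ φ m x := (hφ01 m x).1
          have hr1 : φ m x ≤ 1 := (hφ01 m x).2
          calc ‖(1 - φ m x) • (f (topPt α) - c) + φ m x • (Tn m (resL α g hg m f) x - c)‖
              ≤ ‖(1 - φ m x) • (f (topPt α) - c)‖
                + ‖φ m x • (Tn m (resL α g hg m f) x - c)‖ := norm_add_le _ _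
            _ = (1 - φ m x) * ‖f (topPt α) - c‖
                + φ m x * ‖Tn m (resL α g hg m f) x - c‖ := by
                rw [norm_smul, norm_smul, Real.norm_eq_abs, Real.norm_eq_abs,
                  abs_of_nonneg (by linarith), abs_of_nonneg hr0]
            _ ≤ (1 - φ m x) * ‖f - c • 1‖ + φ m x * ‖f - c • 1‖ := by
                have ha := mul_le_mul_of_nonneg_left htop (by linarith : (0:ℝ) ≤ 1 - φ m x)
                have hb := mul_le_mul_of_nonneg_left h1 hr0
                linarith
            _ = ‖f - c • 1‖ := by ring
        · push_neg at hx
          rw [hLzero f x hx, add_zero]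
          exact htop
      have hTpos : ∀ f, (∀ t, ∃ r : ℝ, 0 ≤ r ∧ f t = algebraMap ℝ 𝕜 r) →
          ∀ x : K, ∃ r : ℝ, 0 ≤ r ∧ T f x = algebraMap ℝ 𝕜 r := by
        intro f hf x
        obtain ⟨rc, hrc0, hrc⟩ := hf (topPt α)
        have hTx : T f x = f (topPt α) + L f x := by
          rw [hTf]
          simp
        rcases Classical.em (∃ m, x ∈ V m) with ⟨m, hm⟩ | hx
        · obtain ⟨ra, hra0, hra⟩ := hTnp m (resL α g hg m f) (fun u => hf _) x
          rw [hTx, hLmem f x m hm, hAux_apply]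
          refine ⟨rc + φ m x * (ra - rc), ?_, ?_⟩
          · have h1 := (hφ01 m x).1
            have h2 := (hφ01 m x).2
            nlinarith
          · rw [hrc, hra, Algebra.smul_def, ← map_sub, ← map_mul, ← map_add]
        · push_neg at hx
          rw [hTx, hLzero f x hx, add_zero]
          exact ⟨rc, hrc0, hrc⟩
      have hTeval : ∀ t, ∃ x ∈ U, ∀ f, T f x = f t := by
        intro t
        rcases eq_or_lt_of_le t.2.2 with htop | hlt
        · refine ⟨s, hsU, fun f => ?_⟩
          have hts : t = topPt α := Subtype.ext htop
          have hz : L f s = 0 := hLzero f s (fun n hn => (hsV n) (subset_closure hn))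
          rw [hTf, ContinuousMap.add_apply, hz, hts]
          simp
        · obtain ⟨n, u, hu1, hu2, hut⟩ := exists_block hsup t.2.1 hlt
          obtain ⟨x, hxV', hx⟩ := hTne n ⟨u, hu1, hu2⟩
          have hxV : x ∈ V n := (hV'V n) (subset_closure hxV')
          refine ⟨x, hVU n (subset_closure hxV), fun f => ?_⟩
          have h2 : Tn n (resL α g hg n f) x = f t := by
            rw [hx (resL α g hg n f), resL_apply]
            congr 1
            exact Subtype.ext hut
          have h3 : φ n x = 1 := hφ1 n (subset_closure hxV')
          have h4 : T f x = f (topPt α) + L f x := by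
            rw [hTf]
            simp
          rw [h4, hLmem f x n hxV, hAux_apply, h2, h3, one_smul]
          ring
      exact ⟨T, hT1, hTnorm, hTpos, hTeval⟩

end NiceEmb


/-- Let `α < ω₁` be a countable ordinal and `K` a compact Hausdorff space
with `K^(α) ≠ ∅`, scalars `𝕜 ∈ {ℝ, ℂ}`. Then there is a linear isometric embedding
`T : C([1, ω^α]) → C(K)` which is positive, unital, and such that for every `t ∈ [1, ω^α]`
there is `s_t ∈ K` with `Tf s_t = f t` for every `f`. -/
theorem nice_embedding_of_CB_derivative_nonempty {𝕜 : Type*} [RCLike 𝕜]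
    {K : Type*} [TopologicalSpace K] [CompactSpace K] [T2Space K]
    (α : Ordinal.{0}) (hα : α.card ≤ Cardinal.aleph0)
    (hK : (cbDeriv K α).Nonempty) :
    ∃ T : C(Set.Icc (1 : Ordinal.{0}) (Ordinal.omega0 ^ α), 𝕜) →ₗᵢ[𝕜] C(K, 𝕜),
      (∀ f : C(Set.Icc (1 : Ordinal.{0}) (Ordinal.omega0 ^ α), 𝕜),
        (∀ t, ∃ r : ℝ, 0 ≤ r ∧ f t = algebraMap ℝ 𝕜 r) →
        ∀ s : K, ∃ r : ℝ, 0 ≤ r ∧ T f s = algebraMap ℝ 𝕜 r) ∧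
      T 1 = 1 ∧
      ∀ t : Set.Icc (1 : Ordinal.{0}) (Ordinal.omega0 ^ α), ∃ s : K,
        ∀ f : C(Set.Icc (1 : Ordinal.{0}) (Ordinal.omega0 ^ α), 𝕜), T f s = f t := by
  obtain ⟨s, hs⟩ := hK
  obtain ⟨T, hT1, hTnorm, hTpos, hTeval⟩ :=
    NiceEmb.key (𝕜 := 𝕜) α hα s hs Set.univ isOpen_univ (Set.mem_univ s)
  have hnorm : ∀ f, ‖T f‖ = ‖f‖ := by
    intro f
    refine le_antisymm ?_ ?_
    · have h := hTnorm f 0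
      simpa using h
    · refine (ContinuousMap.norm_le _ (norm_nonneg _)).2 fun t => ?_
      obtain ⟨x, -, hx⟩ := hTeval t
      rw [← hx f]
      exact ContinuousMap.norm_coe_le_norm _ _
  refine ⟨⟨T, hnorm⟩, ?_, hT1, ?_⟩
  · intro f hf x
    exact hTpos f hf x
  · intro t
    obtain ⟨x, -, hx⟩ := hTeval t
    exact ⟨x, hx⟩

end
end

section
/- For every pair of countable ordinals α, β < ω₁ and scalar field 𝕜 ∈ {ℝ, ℂ}, there exists a map U : C([1, ω^α]) × C([1, ω^β]) → C([1, ω^{α⊕β}]) satisfying: (i) U(f₁+f₂, g₁+g₂) = U(f₁,g₁) + U(f₂,g₂) for all f₁, f₂ ∈ C([1, ω^α]) and g₁, g₂ ∈ C([1, ω^β]); (ii) U(λf, λg) = λ·U(f,g) for every λ ∈ ℝ; (iii) ‖U(f,g)‖ ≤ (1/2)(‖f‖ + ‖g‖); (iv) for every s ∈ [1, ω^α] and t ∈ [1, ω^β] there exists r_{s,t} ∈ [1, ω^{α⊕β}] such that U(f,g)(r_{s,t}) = (1/2)(f(s) + g(t)) for all f, g; (v) for every r ∈ [1, ω^{α⊕β}]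 there exist s_r ∈ [1, ω^α] and t_r ∈ [1, ω^β] such that U(f,g)(r) = (1/2)(f(s_r) + g(t_r)) for all f, g. -/
open scoped ZeroAtInfty

/-- Natural (Hessenberg) addition of ordinals, as in the former `Mathlib.SetTheory.Ordinal.NaturalOps`
(removed from Mathlib). -/
noncomputable def Ordinal.nadd : Ordinal.{u} → Ordinal.{u} → Ordinal.{u}
  | a, b =>
    max (Ordinal.blsub.{u, u} a fun a' _ => Ordinal.nadd a' b)
      (Ordinal.blsub.{u, u} b fun b' _ => Ordinal.nadd a b')
termination_by a b => (a, b)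

infixl:65 " ♯ " => Ordinal.nadd

noncomputable section

theorem Ordinal.nadd_def (a b : Ordinal.{u}) : a ♯ b =
    max (Ordinal.blsub.{u, u} a fun a' _ => a' ♯ b) (Ordinal.blsub.{u, u} b fun b' _ => a ♯ b') := by
  rw [Ordinal.nadd]

theorem Ordinal.lt_nadd_iff {a b c : Ordinal.{u}} :
    a < b ♯ c ↔ (∃ b' < b, a ≤ b' ♯ c) ∨ ∃ c' < c, a ≤ b ♯ c' := by
  rw [Ordinal.nadd_def, lt_max_iff, Ordinal.lt_blsub_iff, Ordinal.lt_blsub_iff]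
  simp only [exists_prop]

theorem Ordinal.nadd_lt_nadd_right {b c : Ordinal.{u}} (h : b < c) (a : Ordinal.{u}) :
    b ♯ a < c ♯ a := by
  rw [Ordinal.nadd_def c a]
  exact lt_max_of_lt_left (Ordinal.lt_blsub.{u, u} (fun a' _ => a' ♯ a) b h)

theorem Ordinal.nadd_lt_nadd_left {b c : Ordinal.{u}} (h : b < c) (a : Ordinal.{u}) :
    a ♯ b < a ♯ c := by
  rw [Ordinal.nadd_def a c]
  exact lt_max_of_lt_right (Ordinal.lt_blsub.{u, u} (fun b' _ => a ♯ b') b h)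

theorem Ordinal.nadd_le_nadd_left {b c : Ordinal.{u}} (h : b ≤ c) (a : Ordinal.{u}) :
    a ♯ b ≤ a ♯ c := by
  rcases h.eq_or_lt with rfl | h
  · exact le_rfl
  · exact (Ordinal.nadd_lt_nadd_left h a).le

theorem Ordinal.nadd_zero (a : Ordinal.{u}) : a ♯ 0 = a := by
  induction a using Ordinal.induction with
  | _ a IH =>
  rw [Ordinal.nadd_def, Ordinal.blsub_zero, max_eq_left zero_le]
  have : (fun a' (_ : a' < a) => a' ♯ 0) = fun a' _ => a' := funext₂ fun a' h => IH a' h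
  rw [this, Ordinal.blsub_id]

theorem Ordinal.zero_nadd (a : Ordinal.{u}) : 0 ♯ a = a := by
  induction a using Ordinal.induction with
  | _ a IH =>
  rw [Ordinal.nadd_def, Ordinal.blsub_zero, max_eq_right zero_le]
  have : (fun b' (_ : b' < a) => 0 ♯ b') = fun b' _ => b' := funext₂ fun b' h => IH b' h
  rw [this, Ordinal.blsub_id]

section OvAuxSection
open Ordinal Set Filter Topology
noncomputable section
namespace OvAux

def psum (e : ℕ → Ordinal.{0}) : ℕ → Ordinal.{0}
  | 0 => 0
  | n+1 => psum e n + omega0 ^ e n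

lemma psum_zero (e : ℕ → Ordinal.{0}) : psum e 0 = 0 := rfl
lemma psum_succ (e : ℕ → Ordinal.{0}) (n : ℕ) :
    psum e (n+1) = psum e n + omega0 ^ e n := rfl

lemma psum_mono (e : ℕ → Ordinal.{0}) : Monotone (psum e) :=
  monotone_nat_of_le_succ fun _ => le_self_add

lemma psum_lt_opow {e : ℕ → Ordinal.{0}} {γ : Ordinal.{0}} (he : ∀ n, e n < γ) (n : ℕ) :
    psum e n < omega0 ^ γ := by
  induction n with
  | zero => exact opow_pos _ omega0_pos
  | succ n ih =>
      exact principal_add_omega0_opow γ ih ((opow_lt_opow_iff_right one_lt_omega0).2 (he n))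

lemma iSup_psum {e : ℕ → Ordinal.{0}} {γ : Ordinal.{0}} (hγ : 0 < γ)
    (he : ∀ n, e n < γ)
    (hcof : ∀ x < γ, ∀ N : ℕ, ∃ n, N ≤ n ∧ x ≤ e n) :
    (⨆ n, psum e n) = omega0 ^ γ := by
  have hbdd : BddAbove (Set.range (psum e)) := Ordinal.bddAbove_range _
  apply le_antisymm
  · exact ciSup_le fun n => (psum_lt_opow he n).le
  · apply le_of_forall_lt
    intro δ hδ
    -- find x < γ and k with δ < ω^x * k
    obtain ⟨x, hxγ, k, hk⟩ : ∃ x < γ, ∃ k : ℕ, δ < omega0 ^ x * k := by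
      rcases eq_or_ne δ 0 with rfl | hδ0
      · exact ⟨0, hγ, 1, by simpa using (opow_pos (0:Ordinal) omega0_pos)⟩
      · refine ⟨log omega0 δ, (lt_opow_iff_log_lt one_lt_omega0 hδ0).1 hδ, ?_⟩
        have h1 : δ < omega0 ^ (Order.succ (log omega0 δ)) :=
          lt_opow_succ_log_self one_lt_omega0 δ
        rw [opow_succ] at h1
        obtain ⟨c', hc', hδc⟩ := (lt_mul_iff_of_isSuccLimit isSuccLimit_omega0).1 h1
        obtain ⟨k, rfl⟩ := lt_omega0.1 hc'
        exact ⟨k, hδc⟩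
    -- find n with ω^x * k ≤ psum e n
    have key : ∀ k : ℕ, ∃ n, omega0 ^ x * k ≤ psum e n := by
      intro k
      induction k with
      | zero => exact ⟨0, by simp⟩
      | succ k ih =>
          obtain ⟨n, hn⟩ := ih
          obtain ⟨m, hnm, hxm⟩ := hcof x hxγ n
          refine ⟨m + 1, ?_⟩
          have : omega0 ^ x * (k+1 : ℕ) = omega0 ^ x * k + omega0 ^ x := by
            push_cast
            rw [mul_add, mul_one]
          rw [this]
          calc omega0 ^ x * k + omega0 ^ x ≤ psum e m + omega0 ^ x :=
                add_le_add_left (hn.trans (psum_mono e hnm)) _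
          _ ≤ psum e m + omega0 ^ e m :=
                add_le_add_right (opow_le_opow_right omega0_pos hxm) _
          _ = psum e (m+1) := rfl
    obtain ⟨n, hn⟩ := key k
    exact lt_of_lt_of_le hk (hn.trans (le_ciSup hbdd n))

def clamp (m : Ordinal.{0}) (z : Ordinal.{0}) : Ordinal.{0} := max 1 (min z m)

lemma one_le_opow_omega0 (α : Ordinal.{0}) : 1 ≤ omega0 ^ α :=
  Order.one_le_iff_pos.2 (opow_pos _ omega0_pos)

lemma clamp_mem (m z : Ordinal.{0}) (hm : 1 ≤ m) : clamp m z ∈ Set.Icc 1 m :=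
  ⟨le_max_left _ _, max_le hm (min_le_right _ _)⟩

lemma clamp_eq (m z : Ordinal.{0}) (h1 : 1 ≤ z) (h2 : z ≤ m) : clamp m z = z := by
  rw [clamp, min_eq_left h2, max_eq_right h1]

lemma clamp_continuous (m : Ordinal.{0}) {f : Ordinal.{0} → Ordinal.{0}} (hf : Continuous f) :
    Continuous fun x => clamp m (f x) :=
  continuous_const.max (hf.min continuous_const)

lemma lt_clamp (m z a : Ordinal.{0}) (ham : a < m) (haz : a < z) : a < clamp m z :=
  lt_of_lt_of_le (lt_min haz ham) (le_max_right _ _)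

lemma continuous_sub_const (c : Ordinal.{0}) : Continuous (fun x : Ordinal => x - c) := by
  rw [continuous_iff_continuousAt]
  intro x
  rw [ContinuousAt, tendsto_order]
  constructor
  · intro l hl
    have hx : c + l < x := Ordinal.lt_sub.1 hl
    filter_upwards [(isOpen_Ioi (a := c + l)).mem_nhds hx] with y hy
    exact Ordinal.lt_sub.2 hy
  · intro u hu
    have h0 : 0 < u := zero_le.trans_lt hu
    have hx : x < c + u := lt_of_le_of_lt (Ordinal.le_add_sub x c) (add_lt_add_right hu c)
    filter_upwards [(isOpen_Iio (a := c + u)).mem_nhds hx] with y hy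
    exact Ordinal.sub_lt_of_lt_add hy h0

lemma continuous_add_const (c : Ordinal.{0}) : Continuous (fun x : Ordinal => c + x) :=
  ((Order.isNormal_iff_strictMono_and_continuous).1 (Ordinal.isNormal_add_right c)).2

lemma lt_iSup_nat {S : ℕ → Ordinal.{0}} {δ : Ordinal.{0}}
    (h : δ < ⨆ n, S n) : ∃ n, δ < S n := by
  by_contra hcon
  push_neg at hcon
  exact absurd (ciSup_le hcon) (not_le.2 h)

open scoped Classical in
/-- The glued map. -/
def glue (α' : Ordinal.{0}) (ζ A : ℕ → Ordinal.{0}) (F : ℕ → Ordinal.{0} → Ordinal.{0})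
    (x : Ordinal.{0}) : Ordinal.{0} :=
  if hx : ∃ m : ℕ, x ≤ psum ζ (m+1) then
    clamp (omega0 ^ α') (A (Nat.find hx / 2) + F (Nat.find hx) (x - psum ζ (Nat.find hx)))
  else omega0 ^ α'

variable {γ' α' : Ordinal.{0}} {ζ A : ℕ → Ordinal.{0}} {F : ℕ → Ordinal.{0} → Ordinal.{0}}

lemma glue_cond (hζ : ∀ m, ζ m < γ') (hsup : (⨆ n, psum ζ n) = omega0 ^ γ')
    (x : Ordinal.{0}) : (∃ m : ℕ, x ≤ psum ζ (m+1)) ↔ x < omega0 ^ γ' := by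
  constructor
  · rintro ⟨m, hm⟩; exact lt_of_le_of_lt hm (psum_lt_opow hζ _)
  · intro hx
    rw [← hsup] at hx
    obtain ⟨m, hm⟩ := lt_iSup_nat hx
    exact ⟨m, hm.le.trans (psum_mono ζ (Nat.le_succ m))⟩

lemma glue_eq_gap {m : ℕ} {x : Ordinal.{0}}
    (h1 : psum ζ m < x) (h2 : x ≤ psum ζ (m+1)) :
    glue α' ζ A F x = clamp (omega0 ^ α') (A (m/2) + F m (x - psum ζ m)) := by
  have hx : ∃ k : ℕ, x ≤ psum ζ (k+1) := ⟨m, h2⟩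
  have hfind : Nat.find hx = m := by
    rw [Nat.find_eq_iff]
    exact ⟨h2, fun k hk hle =>
      absurd (hle.trans (psum_mono ζ (by omega))) (not_le.2 h1)⟩
  rw [glue, dif_pos hx, hfind]

lemma glue_eq_top (hζ : ∀ m, ζ m < γ') (hsup : (⨆ n, psum ζ n) = omega0 ^ γ')
    {x : Ordinal.{0}} (hx : omega0 ^ γ' ≤ x) : glue α' ζ A F x = omega0 ^ α' := by
  have : ¬ ∃ m : ℕ, x ≤ psum ζ (m+1) := fun h =>
    absurd ((glue_cond hζ hsup x).1 h) (not_lt.2 hx)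
  rw [glue, dif_neg this]

lemma glue_mem (x : Ordinal.{0}) : glue α' ζ A F x ∈ Set.Icc 1 (omega0 ^ α') := by
  rw [glue]
  split_ifs with hx
  · exact clamp_mem _ _ (one_le_opow_omega0 α')
  · exact ⟨one_le_opow_omega0 α', le_rfl⟩

lemma glue_gap_lt (hAlt : ∀ n, A n < omega0 ^ α') (hF1 : ∀ m y, 1 ≤ F m y)
    {m : ℕ} {x : Ordinal.{0}} (h1 : psum ζ m < x) (h2 : x ≤ psum ζ (m+1)) :
    A (m/2) < glue α' ζ A F x := by
  rw [glue_eq_gap h1 h2]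
  refine lt_clamp _ _ _ (hAlt _) ?_
  calc A (m/2) = A (m/2) + 0 := (add_zero _).symm
  _ < A (m/2) + F m (x - psum ζ m) :=
      add_lt_add_right (lt_of_lt_of_le zero_lt_one (hF1 _ _)) _

/-- Locate a positive ordinal in the partial-sum decomposition. -/
lemma psum_locate {e : ℕ → Ordinal.{0}} {s : Ordinal.{0}} (h1 : 0 < s)
    (hex : ∃ n : ℕ, s ≤ psum e (n+1)) :
    ∃ n : ℕ, (psum e n < s ∧ s ≤ psum e (n+1)) ∧ ∀ k, s ≤ psum e (k+1) → n ≤ k := by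
  classical
  refine ⟨Nat.find hex, ⟨?_, Nat.find_spec hex⟩, fun k hk => Nat.find_min' hex hk⟩
  rcases Nat.eq_zero_or_pos (Nat.find hex) with h0 | hpos
  · rw [h0]; exact h1
  · obtain ⟨k, hk⟩ : ∃ k, Nat.find hex = k + 1 := ⟨Nat.find hex - 1, by omega⟩
    have hmin := Nat.find_min hex (m := k) (by omega)
    rw [hk]
    exact not_le.1 hmin

lemma glue_continuous (hζ : ∀ m, ζ m < γ') (hsup : (⨆ n, psum ζ n) = omega0 ^ γ')
    (hAmono : Monotone A) (hAlt : ∀ n, A n < omega0 ^ α')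
    (hAsup : (⨆ n, A n) = omega0 ^ α')
    (hFc : ∀ m, Continuous (F m)) (hF1 : ∀ m y, 1 ≤ F m y) :
    Continuous (glue α' ζ A F) := by
  have hPmc : ∀ m : ℕ, Continuous (fun x : Ordinal.{0} =>
      clamp (omega0 ^ α') (A (m/2) + F m (x - psum ζ m))) := fun m =>
    clamp_continuous _ ((continuous_add_const _).comp ((hFc m).comp (continuous_sub_const _)))
  rw [continuous_iff_continuousAt]
  intro x
  rcases lt_trichotomy x (omega0 ^ γ') with hx | hx | hx
  · rcases eq_zero_or_pos x with rfl | hx0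
    · have h01 : Set.Iio (1:Ordinal.{0}) ∈ 𝓝 (0:Ordinal.{0}) :=
        isOpen_Iio.mem_nhds (Set.mem_Iio.2 zero_lt_one)
      have heq : glue α' ζ A F =ᶠ[𝓝 (0:Ordinal.{0})] fun _ => glue α' ζ A F 0 := by
        filter_upwards [h01] with y hy
        rw [Ordinal.lt_one_iff_zero.1 hy]
      exact continuousAt_const.congr heq.symm
    · obtain ⟨m, ⟨h1, h2⟩, -⟩ := psum_locate hx0 ((glue_cond hζ hsup x).2 hx)
      have hopen : IsOpen (Set.Ioc (psum ζ m) (psum ζ (m+1))) := by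
        have : Set.Ioc (psum ζ m) (psum ζ (m+1))
            = Set.Ioo (psum ζ m) (psum ζ (m+1) + 1) := by
          ext y
          simp only [Set.mem_Ioc, Set.mem_Ioo, Ordinal.add_one_eq_succ, Order.lt_succ_iff]
        rw [this]
        exact isOpen_Ioo
      have hmem : Set.Ioc (psum ζ m) (psum ζ (m+1)) ∈ 𝓝 x := hopen.mem_nhds ⟨h1, h2⟩
      have heq : glue α' ζ A F =ᶠ[𝓝 x]
          (fun y => clamp (omega0 ^ α') (A (m/2) + F m (y - psum ζ m))) := by
        filter_upwards [hmem] with y hy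
        exact glue_eq_gap hy.1 hy.2
      exact ((hPmc m).continuousAt).congr heq.symm
  · subst hx
    rw [ContinuousAt, glue_eq_top hζ hsup le_rfl, tendsto_order]
    constructor
    · intro l hl
      obtain ⟨N, hN⟩ := lt_iSup_nat (by rwa [hAsup] : l < ⨆ n, A n)
      have hmem : Set.Ioi (psum ζ (2*N+1)) ∈ 𝓝 (omega0 ^ γ') :=
        isOpen_Ioi.mem_nhds (psum_lt_opow hζ _)
      filter_upwards [hmem] with y hy
      rcases le_or_gt (omega0 ^ γ') y with hy2 | hy2
      · rw [glue_eq_top hζ hsup hy2]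
        exact hN.trans (hAlt N)
      · have hy0 : 0 < y := lt_of_le_of_lt zero_le hy
        obtain ⟨m, ⟨h1, h2⟩, hmin⟩ := psum_locate hy0 ((glue_cond hζ hsup y).2 hy2)
        have hmge : 2*N+1 ≤ m := by
          by_contra hcon
          push_neg at hcon
          exact absurd (h2.trans (psum_mono ζ (by omega))) (not_le.2 hy)
        have hAN : A N ≤ A (m/2) := hAmono (by omega)
        exact lt_of_lt_of_le (lt_of_lt_of_le hN hAN) (glue_gap_lt hAlt hF1 h1 h2).le
    · intro u hu
      filter_upwards with y
      exact lt_of_le_of_lt (glue_mem y).2 hu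
  · have hmem : Set.Ioi (omega0 ^ γ') ∈ 𝓝 x := isOpen_Ioi.mem_nhds hx
    have heq : glue α' ζ A F =ᶠ[𝓝 x] fun _ => omega0 ^ α' := by
      filter_upwards [hmem] with y hy
      exact glue_eq_top hζ hsup hy.le
    exact continuousAt_const.congr heq.symm

lemma exists_enum (α : Ordinal.{0}) (h0 : 0 < α) (hc : α.card ≤ Cardinal.aleph0) :
    ∃ e : ℕ → Ordinal.{0}, (∀ n, e n < α) ∧ ∀ x < α, ∀ N : ℕ, ∃ n, N ≤ n ∧ e n = x := by
  have hcnt : (Set.Iio α).Countable := by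
    rw [Set.countable_coe_iff.symm, ← Cardinal.mk_le_aleph0_iff] at *
    rw [Ordinal.mk_Iio_ordinal]
    exact (Cardinal.lift_le_aleph0).2 hc
  obtain ⟨f, hf⟩ := hcnt.exists_eq_range ⟨0, h0⟩
  refine ⟨fun n => f n.unpair.1, fun n => ?_, fun x hx N => ?_⟩
  · have : f n.unpair.1 ∈ Set.range f := ⟨_, rfl⟩
    rwa [← hf] at this
  · have : x ∈ Set.range f := by rwa [← hf]
    obtain ⟨i, hi⟩ := this
    exact ⟨Nat.pair i N, Nat.right_le_pair i N, by simp only [Nat.unpair_pair]; exact hi⟩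

def Ov (γ α β : Ordinal.{0}) : Prop :=
  ∃ p q : Ordinal.{0} → Ordinal.{0},
    Continuous p ∧ Continuous q ∧
    (∀ x, p x ∈ Set.Icc 1 (omega0 ^ α)) ∧
    (∀ x, q x ∈ Set.Icc 1 (omega0 ^ β)) ∧
    ∀ s ∈ Set.Icc 1 (omega0 ^ α), ∀ t ∈ Set.Icc 1 (omega0 ^ β),
      ∃ x ∈ Set.Icc 1 (omega0 ^ γ), p x = s ∧ q x = t

lemma ov_mono {γ γ' α β : Ordinal.{0}} (h : Ov γ α β) (hγ : γ ≤ γ') : Ov γ' α β := by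
  obtain ⟨p, q, hpc, hqc, hpr, hqr, hcov⟩ := h
  refine ⟨fun x => p (min x (omega0 ^ γ)), fun x => q (min x (omega0 ^ γ)),
    hpc.comp (continuous_id.min continuous_const),
    hqc.comp (continuous_id.min continuous_const),
    fun x => hpr _, fun x => hqr _, fun s hs t ht => ?_⟩
  obtain ⟨x, hx, hps, hqt⟩ := hcov s hs t ht
  refine ⟨x, ⟨hx.1, hx.2.trans (opow_le_opow_right omega0_pos hγ)⟩, ?_, ?_⟩ <;>
    simp only [min_eq_left hx.2] <;> assumption

lemma ov_zero_right (α : Ordinal.{0}) : Ov α α 0 := by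
  refine ⟨fun x => clamp (omega0 ^ α) x, fun _ => 1,
    clamp_continuous _ continuous_id, continuous_const,
    fun x => clamp_mem _ _ (one_le_opow_omega0 α),
    fun x => by simp, fun s hs t ht => ?_⟩
  have ht1 : t = 1 := le_antisymm (by simpa using ht.2) ht.1
  exact ⟨s, hs, clamp_eq _ _ hs.1 hs.2, ht1.symm⟩

lemma ov_zero_left (β : Ordinal.{0}) : Ov β 0 β := by
  refine ⟨fun _ => 1, fun x => clamp (omega0 ^ β) x,
    continuous_const, clamp_continuous _ continuous_id,
    fun x => by simp,
    fun x => clamp_mem _ _ (one_le_opow_omega0 β), fun s hs t ht => ?_⟩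
  have hs1 : s = 1 := le_antisymm (by simpa using hs.2) hs.1
  exact ⟨t, ht, hs1.symm, clamp_eq _ _ ht.1 ht.2⟩


theorem ov_nadd (γ : Ordinal.{0}) : ∀ α β : Ordinal.{0}, α.card ≤ Cardinal.aleph0 →
    β.card ≤ Cardinal.aleph0 → α ♯ β = γ → Ov γ α β := by
  induction γ using Ordinal.induction with
  | _ γ IH =>
  intro α β hcα hcβ hγ
  rcases eq_zero_or_pos α with rfl | hα0
  · rw [Ordinal.zero_nadd] at hγ; subst hγ; exact ov_zero_left β
  rcases eq_zero_or_pos β with rfl | hβ0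
  · rw [Ordinal.nadd_zero] at hγ; subst hγ; exact ov_zero_right α
  subst hγ
  obtain ⟨eα, heα, heα'⟩ := exists_enum α hα0 hcα
  obtain ⟨eβ, heβ, heβ'⟩ := exists_enum β hβ0 hcβ
  set a : ℕ → Ordinal.{0} := psum eα with ha_def
  set b : ℕ → Ordinal.{0} := psum eβ with hb_def
  set ζ : ℕ → Ordinal.{0} := fun m => max (eα (m/2) ♯ β) (α ♯ eβ (m/2)) with hζ_def
  have hζlt : ∀ m, ζ m < α ♯ β := fun m =>
    max_lt (Ordinal.nadd_lt_nadd_right (heα _) β) (Ordinal.nadd_lt_nadd_left (heβ _) α)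
  have hγpos : 0 < α ♯ β := by
    calc (0:Ordinal.{0}) < α := hα0
    _ = α ♯ 0 := (Ordinal.nadd_zero α).symm
    _ ≤ α ♯ β := Ordinal.nadd_le_nadd_left (zero_le : (0:Ordinal.{0}) ≤ β) α
  have ha_lt : ∀ n, a n < omega0 ^ α := psum_lt_opow heα
  have hb_lt : ∀ n, b n < omega0 ^ β := psum_lt_opow heβ
  have ha_sup : (⨆ n, a n) = omega0 ^ α := by
    refine iSup_psum hα0 heα fun x hx N => ?_
    obtain ⟨n, hn, he⟩ := heα' x hx N
    exact ⟨n, hn, he.ge⟩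
  have hb_sup : (⨆ n, b n) = omega0 ^ β := by
    refine iSup_psum hβ0 heβ fun x hx N => ?_
    obtain ⟨n, hn, he⟩ := heβ' x hx N
    exact ⟨n, hn, he.ge⟩
  have hc_sup : (⨆ n, psum ζ n) = omega0 ^ (α ♯ β) := by
    refine iSup_psum hγpos hζlt fun x hx N => ?_
    rcases Ordinal.lt_nadd_iff.1 hx with ⟨a', ha', hxa⟩ | ⟨b', hb', hxb⟩
    · obtain ⟨n, hn, he⟩ := heα' a' ha' N
      refine ⟨2*n, by omega, ?_⟩
      have hdiv : (2*n)/2 = n := by omega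
      calc x ≤ a' ♯ β := hxa
      _ = eα n ♯ β := by rw [he]
      _ ≤ ζ (2*n) := by rw [hζ_def]; simp only [hdiv]; exact le_max_left _ _
    · obtain ⟨n, hn, he⟩ := heβ' b' hb' N
      refine ⟨2*n+1, by omega, ?_⟩
      have hdiv : (2*n+1)/2 = n := by omega
      calc x ≤ α ♯ b' := hxb
      _ = α ♯ eβ n := by rw [he]
      _ ≤ ζ (2*n+1) := by rw [hζ_def]; simp only [hdiv]; exact le_max_right _ _
  -- the inductively obtained maps on the gap pieces
  have hA : ∀ n : ℕ, Ov (ζ (2*n)) (eα n) β := by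
    intro n
    have h1 : eα n ♯ β < α ♯ β := Ordinal.nadd_lt_nadd_right (heα n) β
    refine ov_mono (IH _ h1 (eα n) β ((Ordinal.card_le_card (heα n).le).trans hcα) hcβ rfl) ?_
    have hdiv : (2*n)/2 = n := by omega
    rw [hζ_def]; simp only [hdiv]; exact le_max_left _ _
  have hB : ∀ n : ℕ, Ov (ζ (2*n+1)) α (eβ n) := by
    intro n
    have h1 : α ♯ eβ n < α ♯ β := Ordinal.nadd_lt_nadd_left (heβ n) α
    refine ov_mono (IH _ h1 α (eβ n) hcα ((Ordinal.card_le_card (heβ n).le).trans hcβ) rfl) ?_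
    have hdiv : (2*n+1)/2 = n := by omega
    rw [hζ_def]; simp only [hdiv]; exact le_max_right _ _
  choose pA qA hpAc hqAc hpAr hqAr hAcov using hA
  choose pB qB hpBc hqBc hpBr hqBr hBcov using hB
  classical
  set F : ℕ → Ordinal.{0} → Ordinal.{0} :=
    fun m y => if Even m then pA (m/2) y else pB (m/2) y with hF_def
  set G : ℕ → Ordinal.{0} → Ordinal.{0} :=
    fun m y => if Even m then qA (m/2) y else qB (m/2) y with hG_def
  have hFc : ∀ m, Continuous (F m) := by
    intro m
    by_cases h : Even m <;> simp only [hF_def, h, if_true, if_false]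
    · exact hpAc _
    · exact hpBc _
  have hGc : ∀ m, Continuous (G m) := by
    intro m
    by_cases h : Even m <;> simp only [hG_def, h, if_true, if_false]
    · exact hqAc _
    · exact hqBc _
  have hF1 : ∀ m y, 1 ≤ F m y := by
    intro m y
    by_cases h : Even m <;> simp only [hF_def, h, if_true, if_false]
    · exact (hpAr _ y).1
    · exact (hpBr _ y).1
  have hG1 : ∀ m y, 1 ≤ G m y := by
    intro m y
    by_cases h : Even m <;> simp only [hG_def, h, if_true, if_false]
    · exact (hqAr _ y).1
    · exact (hqBr _ y).1
  -- the two glued coordinate maps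
  refine ⟨glue α ζ a F, glue β ζ b G,
    glue_continuous hζlt hc_sup (psum_mono eα) ha_lt ha_sup hFc hF1,
    glue_continuous hζlt hc_sup (psum_mono eβ) hb_lt hb_sup hGc hG1,
    glue_mem, glue_mem, ?_⟩
  -- coverage
  have hcovA : ∀ n : ℕ, ∀ s t : Ordinal.{0}, a n < s → s ≤ a (n+1) → b n < t →
      t ≤ omega0 ^ β →
      ∃ x ∈ Set.Icc 1 (omega0 ^ (α ♯ β)), glue α ζ a F x = s ∧ glue β ζ b G x = t := by
    intro n s t hs1 hs2 ht1 ht2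
    have hsa : s - a n ∈ Set.Icc 1 (omega0 ^ eα n) := by
      constructor
      · exact Order.one_le_iff_pos.2 (Ordinal.lt_sub.2 (by simpa using hs1))
      · rw [Ordinal.sub_le]; exact hs2
    have htb : t - b n ∈ Set.Icc 1 (omega0 ^ β) := by
      constructor
      · exact Order.one_le_iff_pos.2 (Ordinal.lt_sub.2 (by simpa using ht1))
      · rw [Ordinal.sub_le]; exact ht2.trans (le_add_self)
    obtain ⟨x₀, hx₀, hpx₀, hqx₀⟩ := hAcov n _ hsa _ htb
    have hgap1 : psum ζ (2*n) < psum ζ (2*n) + x₀ := by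
      calc psum ζ (2*n) = psum ζ (2*n) + 0 := (add_zero _).symm
      _ < psum ζ (2*n) + x₀ := add_lt_add_right (lt_of_lt_of_le zero_lt_one hx₀.1) _
    have hgap2 : psum ζ (2*n) + x₀ ≤ psum ζ (2*n+1) := by
      rw [psum_succ]
      exact add_le_add_right hx₀.2 _
    have hme : Even (2*n) := even_two_mul n
    have hdiv : (2*n)/2 = n := by omega
    refine ⟨psum ζ (2*n) + x₀,
      ⟨hx₀.1.trans (le_add_self), hgap2.trans (psum_lt_opow hζlt _).le⟩, ?_, ?_⟩
    · rw [glue_eq_gap hgap1 hgap2, Ordinal.add_sub_cancel]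
      simp only [hF_def, hme, if_true, hdiv, hpx₀]
      rw [Ordinal.add_sub_cancel_of_le hs1.le]
      exact clamp_eq _ _ (Order.one_le_iff_pos.2 (zero_le.trans_lt hs1))
        (hs2.trans (ha_lt (n+1)).le)
    · rw [glue_eq_gap hgap1 hgap2, Ordinal.add_sub_cancel]
      simp only [hG_def, hme, if_true, hdiv, hqx₀]
      rw [Ordinal.add_sub_cancel_of_le ht1.le]
      exact clamp_eq _ _ (Order.one_le_iff_pos.2 (zero_le.trans_lt ht1)) ht2
  have hcovB : ∀ n : ℕ, ∀ s t : Ordinal.{0}, a n < s → s ≤ omega0 ^ α → b n < t →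
      t ≤ b (n+1) →
      ∃ x ∈ Set.Icc 1 (omega0 ^ (α ♯ β)), glue α ζ a F x = s ∧ glue β ζ b G x = t := by
    intro n s t hs1 hs2 ht1 ht2
    have hsa : s - a n ∈ Set.Icc 1 (omega0 ^ α) := by
      constructor
      · exact Order.one_le_iff_pos.2 (Ordinal.lt_sub.2 (by simpa using hs1))
      · rw [Ordinal.sub_le]; exact hs2.trans (le_add_self)
    have htb : t - b n ∈ Set.Icc 1 (omega0 ^ eβ n) := by
      constructor
      · exact Order.one_le_iff_pos.2 (Ordinal.lt_sub.2 (by simpa using ht1))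
      · rw [Ordinal.sub_le]; exact ht2
    obtain ⟨x₀, hx₀, hpx₀, hqx₀⟩ := hBcov n _ hsa _ htb
    have hgap1 : psum ζ (2*n+1) < psum ζ (2*n+1) + x₀ := by
      calc psum ζ (2*n+1) = psum ζ (2*n+1) + 0 := (add_zero _).symm
      _ < psum ζ (2*n+1) + x₀ := add_lt_add_right (lt_of_lt_of_le zero_lt_one hx₀.1) _
    have hgap2 : psum ζ (2*n+1) + x₀ ≤ psum ζ (2*n+1+1) := by
      rw [psum_succ]
      exact add_le_add_right hx₀.2 _
    have hme : ¬ Even (2*n+1) := by rw [Nat.even_iff]; omega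
    have hdiv : (2*n+1)/2 = n := by omega
    refine ⟨psum ζ (2*n+1) + x₀,
      ⟨hx₀.1.trans (le_add_self), hgap2.trans (psum_lt_opow hζlt _).le⟩, ?_, ?_⟩
    · rw [glue_eq_gap hgap1 hgap2, Ordinal.add_sub_cancel]
      simp only [hF_def, hme, if_false, hdiv, hpx₀]
      rw [Ordinal.add_sub_cancel_of_le hs1.le]
      exact clamp_eq _ _ (Order.one_le_iff_pos.2 (zero_le.trans_lt hs1)) hs2
    · rw [glue_eq_gap hgap1 hgap2, Ordinal.add_sub_cancel]
      simp only [hG_def, hme, if_false, hdiv, hqx₀]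
      rw [Ordinal.add_sub_cancel_of_le ht1.le]
      exact clamp_eq _ _ (Order.one_le_iff_pos.2 (zero_le.trans_lt ht1))
        (ht2.trans (hb_lt (n+1)).le)
  -- locating the target point
  intro s hs t ht
  have hsloc : s < omega0 ^ α →
      ∃ n : ℕ, (a n < s ∧ s ≤ a (n+1)) ∧ ∀ k, s ≤ a (k+1) → n ≤ k := by
    intro hslt
    refine psum_locate (lt_of_lt_of_le zero_lt_one hs.1) ?_
    rw [← ha_sup] at hslt
    obtain ⟨n, hn⟩ := lt_iSup_nat hslt
    exact ⟨n, hn.le.trans (psum_mono eα (Nat.le_succ n))⟩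
  have htloc : t < omega0 ^ β →
      ∃ n : ℕ, (b n < t ∧ t ≤ b (n+1)) ∧ ∀ k, t ≤ b (k+1) → n ≤ k := by
    intro htlt
    refine psum_locate (lt_of_lt_of_le zero_lt_one ht.1) ?_
    rw [← hb_sup] at htlt
    obtain ⟨n, hn⟩ := lt_iSup_nat htlt
    exact ⟨n, hn.le.trans (psum_mono eβ (Nat.le_succ n))⟩
  rcases hs.2.eq_or_lt with hseq | hslt
  · rcases ht.2.eq_or_lt with hteq | htlt
    · refine ⟨omega0 ^ (α ♯ β), ⟨one_le_opow_omega0 _, le_rfl⟩, ?_, ?_⟩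
      · rw [glue_eq_top hζlt hc_sup le_rfl, hseq]
      · rw [glue_eq_top hζlt hc_sup le_rfl, hteq]
    · obtain ⟨n, ⟨ht1, ht2⟩, -⟩ := htloc htlt
      exact hcovB n s t (lt_of_lt_of_eq (ha_lt n) hseq.symm) hs.2 ht1 ht2
  · rcases ht.2.eq_or_lt with hteq | htlt
    · obtain ⟨n, ⟨hs1, hs2⟩, -⟩ := hsloc hslt
      exact hcovA n s t hs1 hs2 (lt_of_lt_of_eq (hb_lt n) hteq.symm) ht.2
    · obtain ⟨ns, ⟨hs1, hs2⟩, -⟩ := hsloc hslt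
      obtain ⟨nt, ⟨ht1, ht2⟩, -⟩ := htloc htlt
      rcases le_total ns nt with hnn | hnn
      · exact hcovA ns s t hs1 hs2 (lt_of_le_of_lt (psum_mono eβ hnn) ht1) ht.2
      · exact hcovB nt s t (lt_of_le_of_lt (psum_mono eα hnn) hs1) hs.2 ht1 ht2

end OvAux
end
end OvAuxSection

/-- For every pair of countable ordinals `α, β < ω₁` and scalars
`𝕜 ∈ {ℝ, ℂ}`, there is an "overlapping map"
`U : C([1, ω^α]) × C([1, ω^β]) → C([1, ω^(α ⊕ β)])` (with `α ⊕ β` the natural/Hessenberg sum,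
written `α ♯ β`) that is jointly additive, jointly homogeneous for real scalars, satisfies
`‖U f g‖ ≤ (‖f‖ + ‖g‖)/2`, realizes every average `(f s + g t)/2` at some point, and whose
every value is of this form. -/
theorem overlapping_map_exists {𝕜 : Type*} [RCLike 𝕜]
    (α β : Ordinal.{0}) (hα : α.card ≤ Cardinal.aleph0) (hβ : β.card ≤ Cardinal.aleph0) :
    ∃ U : C(Set.Icc (1 : Ordinal.{0}) (Ordinal.omega0 ^ α), 𝕜) →
          C(Set.Icc (1 : Ordinal.{0}) (Ordinal.omega0 ^ β), 𝕜) →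
          C(Set.Icc (1 : Ordinal.{0}) (Ordinal.omega0 ^ (α ♯ β)), 𝕜),
      (∀ f₁ f₂ g₁ g₂, U (f₁ + f₂) (g₁ + g₂) = U f₁ g₁ + U f₂ g₂) ∧
      (∀ f g (l : ℝ), U (l • f) (l • g) = l • U f g) ∧
      (∀ f g, ‖U f g‖ ≤ (‖f‖ + ‖g‖) / 2) ∧
      (∀ (s : Set.Icc (1 : Ordinal.{0}) (Ordinal.omega0 ^ α))
         (t : Set.Icc (1 : Ordinal.{0}) (Ordinal.omega0 ^ β)),
         ∃ r, ∀ f g, U f g r = (f s + g t) / 2) ∧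
      (∀ r : Set.Icc (1 : Ordinal.{0}) (Ordinal.omega0 ^ (α ♯ β)),
         ∃ s t, ∀ f g, U f g r = (f s + g t) / 2) := by
  obtain ⟨p, q, hpc, hqc, hpr, hqr, hcov⟩ := OvAux.ov_nadd (α ♯ β) α β hα hβ rfl
  let P : Set.Icc (1 : Ordinal.{0}) (Ordinal.omega0 ^ (α ♯ β)) →
      Set.Icc (1 : Ordinal.{0}) (Ordinal.omega0 ^ α) := fun r => ⟨p r.1, hpr r.1⟩
  let Q : Set.Icc (1 : Ordinal.{0}) (Ordinal.omega0 ^ (α ♯ β)) →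
      Set.Icc (1 : Ordinal.{0}) (Ordinal.omega0 ^ β) := fun r => ⟨q r.1, hqr r.1⟩
  have hPc : Continuous P := Continuous.subtype_mk (hpc.comp continuous_subtype_val) _
  have hQc : Continuous Q := Continuous.subtype_mk (hqc.comp continuous_subtype_val) _
  refine ⟨fun f g => ⟨fun r => (f (P r) + g (Q r)) / 2,
    ((f.continuous.comp hPc).add (g.continuous.comp hQc)).div_const 2⟩, ?_, ?_, ?_, ?_, ?_⟩
  · intro f₁ f₂ g₁ g₂
    ext r
    simp only [ContinuousMap.coe_mk, ContinuousMap.add_apply]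
    ring
  · intro f g l
    ext r
    simp only [ContinuousMap.coe_mk, ContinuousMap.smul_apply]
    rw [RCLike.real_smul_eq_coe_mul, RCLike.real_smul_eq_coe_mul,
      RCLike.real_smul_eq_coe_mul]
    ring
  · intro f g
    rw [ContinuousMap.norm_le _ (by positivity)]
    intro r
    simp only [ContinuousMap.coe_mk]
    rw [norm_div]
    have h2 : ‖(2:𝕜)‖ = 2 := by simpa using RCLike.norm_natCast (K := 𝕜) 2
    rw [h2]
    gcongr
    exact (norm_add_le _ _).trans
      (add_le_add (f.norm_coe_le_norm _) (g.norm_coe_le_norm _))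
  · intro s t
    obtain ⟨x, hx, hps, hqt⟩ := hcov s.1 s.2 t.1 t.2
    refine ⟨⟨x, hx⟩, fun f g => ?_⟩
    have h1 : P ⟨x, hx⟩ = s := Subtype.ext hps
    have h2 : Q ⟨x, hx⟩ = t := Subtype.ext hqt
    simp only [ContinuousMap.coe_mk, h1, h2]
  · intro r
    exact ⟨P r, Q r, fun f g => rfl⟩

end
end

section
/- Let 𝕜 ∈ {ℝ, ℂ}. The space C([0, ω]) contains no infinite-dimensional subspace that does SPR, whereas the space C([0, ω] × [0, ω]) contains an infinite-dimensional closed subspace that does SPR. -/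
open scoped ZeroAtInfty

noncomputable section

set_option synthInstance.maxHeartbeats 1000000
set_option maxHeartbeats 1000000

section SPRAuxSection
open Ordinal Filter Topology RCLike

namespace SPRAux


abbrev KK : Type 1 := ↥(Set.Icc (0 : Ordinal.{0}) Ordinal.omega0)

def pn (n : ℕ) : KK := ⟨(n : Ordinal), ⟨zero_le, (Ordinal.nat_lt_omega0 n).le⟩⟩

def pom : KK := ⟨Ordinal.omega0, ⟨zero_le, le_rfl⟩⟩

lemma classify (x : KK) : x = pom ∨ ∃ n : ℕ, x = pn n := by
  rcases lt_or_eq_of_le x.2.2 with h | h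
  · rcases Ordinal.lt_omega0.1 h with ⟨n, hn⟩
    exact Or.inr ⟨n, Subtype.ext hn⟩
  · exact Or.inl (Subtype.ext h)

lemma tendsto_pn : Tendsto pn atTop (𝓝 pom) := by
  rw [nhds_subtype_eq_comap, tendsto_comap_iff]
  have h : (Subtype.val ∘ pn) = fun n : ℕ => (n : Ordinal) := rfl
  rw [h]
  refine tendsto_order.2 ⟨?_, ?_⟩
  · intro a ha
    rcases Ordinal.lt_omega0.1 ha with ⟨k, rfl⟩
    filter_upwards [eventually_gt_atTop k] with n hn
    exact_mod_cast hn
  · intro a ha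
    filter_upwards with n
    exact (Ordinal.nat_lt_omega0 n).trans ha

variable {𝕜 : Type*} [RCLike 𝕜]

def evalL {X : Type*} [TopologicalSpace X] (z : X) : C(X, 𝕜) →ₗ[𝕜] 𝕜 where
  toFun f := f z
  map_add' _ _ := rfl
  map_smul' _ _ := rfl

lemma exists_mem_ne_zero_of_map_zero {X : Type 1} [TopologicalSpace X]
    (E : Submodule 𝕜 C(X, 𝕜)) (hE : ¬ FiniteDimensional 𝕜 E)
    {W : Type*} [AddCommGroup W] [Module 𝕜 W] [FiniteDimensional 𝕜 W]
    (Φ : C(X, 𝕜) →ₗ[𝕜] W) : ∃ f ∈ E, f ≠ 0 ∧ Φ f = 0 := by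
  by_contra h
  push_neg at h
  have hinj : Function.Injective (Φ.comp E.subtype) := by
    intro a b hab
    by_contra hne
    have hmem : ((a : C(X, 𝕜)) - b) ∈ E := E.sub_mem a.2 b.2
    have hne2 : (a : C(X, 𝕜)) - b ≠ 0 := sub_ne_zero.2 (fun hc => hne (Subtype.ext hc))
    apply h _ hmem hne2
    have he : Φ ((a : C(X, 𝕜)) - b) = Φ a - Φ b := map_sub _ _ _
    rw [he, sub_eq_zero]
    exact hab
  exact hE (FiniteDimensional.of_injective (Φ.comp E.subtype) hinj)

lemma norm_eq_max {X : Type*} [TopologicalSpace X] [CompactSpace X] [Nonempty X]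
    (f : C(X, 𝕜)) : ∃ x, ‖f x‖ = ‖f‖ := by
  obtain ⟨x, -, hx⟩ := CompactSpace.isCompact_univ.exists_isMaxOn Set.univ_nonempty
    (f.continuous.norm.continuousOn)
  exact ⟨x, le_antisymm (f.norm_coe_le_norm x) ((f.norm_le (norm_nonneg _)).2
    fun y => hx (Set.mem_univ y))⟩

lemma key1 (p q : 𝕜) : |‖p + q‖ - ‖p - q‖| ≤ 2 * ‖q‖ := by
  have e1 : p + q = (p - q) + (q + q) := by ring
  have e2 : p - q = (p + q) + (-(q + q)) := by ring
  have h1 : ‖p + q‖ ≤ ‖p - q‖ + 2 * ‖q‖ := by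
    rw [e1]
    refine le_trans (norm_add_le _ _) ?_
    have := norm_add_le q q
    linarith
  have h2 : ‖p - q‖ ≤ ‖p + q‖ + 2 * ‖q‖ := by
    rw [e2]
    refine le_trans (norm_add_le _ _) ?_
    have h3 : ‖-(q+q)‖ = ‖q+q‖ := norm_neg _
    have h4 := norm_add_le q q
    rw [h3]
    linarith
  rw [abs_sub_le_iff]
  exact ⟨by linarith, by linarith⟩

lemma abs_norm_addsub (p q : 𝕜) : |‖p + q‖ - ‖p - q‖| ≤ 2 * min ‖p‖ ‖q‖ := by
  rcases le_total ‖p‖ ‖q‖ with h | h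
  · rw [min_eq_left h]
    have h2 := key1 q p
    rw [add_comm q p, norm_sub_rev q p] at h2
    simpa [abs_sub_comm] using h2
  · rw [min_eq_right h]; exact key1 p q

instance : Nonempty KK := ⟨pom⟩

theorem part1 (E : Submodule 𝕜 C(KK, 𝕜)) (h : DoesSPR E) : FiniteDimensional 𝕜 E := by
  by_contra hE
  obtain ⟨C, hC1, hspr⟩ := h
  have hC0 : (0:ℝ) < C := lt_of_lt_of_le one_pos hC1
  set ε : ℝ := 1/(8*C) with hεdef
  have hε0 : 0 < ε := by positivity
  have hε8 : ε ≤ 1/8 := by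
    rw [hεdef]
    rw [div_le_div_iff₀ (by positivity) (by norm_num)]
    linarith
  -- Step 1: find f ∈ E with ‖f‖ = 1 and f pom = 0
  obtain ⟨f0, hf0E, hf0ne, hf0om⟩ := exists_mem_ne_zero_of_map_zero E hE (evalL pom)
  have hf0norm : ‖f0‖ ≠ 0 := by simpa using hf0ne
  set f : C(KK, 𝕜) := (‖f0‖⁻¹ : 𝕜) • f0 with hfdef
  have hfE : f ∈ E := E.smul_mem _ hf0E
  have hfom : f pom = 0 := by
    have : f pom = (‖f0‖⁻¹ : 𝕜) * f0 pom := rfl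
    rw [this]
    have : f0 pom = 0 := hf0om
    rw [this, mul_zero]
  have hfnorm : ‖f‖ = 1 := by
    rw [hfdef, norm_smul]
    have h5 : ‖((‖f0‖ : 𝕜))⁻¹‖ = ‖f0‖⁻¹ := by
      rw [norm_inv, RCLike.norm_ofReal, abs_norm]
    rw [h5, inv_mul_cancel₀ hf0norm]
  -- Step 2: find N with ‖f x‖ ≤ ε for x beyond N
  have htend : Tendsto (fun n => ‖f (pn n)‖) atTop (𝓝 0) := by
    have h1 : Tendsto (fun n => f (pn n)) atTop (𝓝 (f pom)) :=
      (f.continuous.tendsto pom).comp tendsto_pn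
    rw [hfom] at h1
    simpa using h1.norm
  obtain ⟨N, hN⟩ := (htend.eventually (eventually_le_nhds hε0)).exists_forall_of_atTop
  -- Step 3: find g ∈ E with ‖g‖ = 1, vanishing at pom and at pn n for n ≤ N
  obtain ⟨g0, hg0E, hg0ne, hg0z⟩ := exists_mem_ne_zero_of_map_zero E hE
    (LinearMap.prod (LinearMap.pi fun i : Fin (N+1) => evalL (pn i.val)) (evalL pom))
  have hg0pi : ∀ i : Fin (N+1), g0 (pn i.val) = 0 := by
    intro i
    have h1 := congrArg Prod.fst hg0z
    exact congrFun h1 i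
  have hg0norm : ‖g0‖ ≠ 0 := by simpa using hg0ne
  set g : C(KK, 𝕜) := (‖g0‖ : 𝕜)⁻¹ • g0 with hgdef
  have hgE : g ∈ E := E.smul_mem _ hg0E
  have hgz : ∀ n : ℕ, n ≤ N → g (pn n) = 0 := by
    intro n hn
    have h1 : g (pn n) = (‖g0‖ : 𝕜)⁻¹ * g0 (pn n) := rfl
    rw [h1, hg0pi ⟨n, Nat.lt_succ_of_le hn⟩, mul_zero]
  have hgnorm : ‖g‖ = 1 := by
    rw [hgdef, norm_smul]
    have h5 : ‖((‖g0‖ : 𝕜))⁻¹‖ = ‖g0‖⁻¹ := by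
      rw [norm_inv, RCLike.norm_ofReal, abs_norm]
    rw [h5, inv_mul_cancel₀ hg0norm]
  -- Step 4: pointwise smallness of the overlap
  have hming : ∀ x : KK, min ‖f x‖ ‖g x‖ ≤ ε := by
    intro x
    rcases classify x with rfl | ⟨n, rfl⟩
    · rw [hfom]
      simpa using le_of_lt hε0
    · rcases le_or_gt n N with hn | hn
      · rw [hgz n hn]
        simpa using le_of_lt hε0
      · exact le_trans (min_le_left _ _) (hN n hn.le)
  -- Step 5: the moduli of f+g and f-g are uniformly close
  have hub : ‖cmAbs (f + g) - cmAbs (f - g)‖ ≤ 2 * ε := by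
    rw [ContinuousMap.norm_le _ (by positivity)]
    intro x
    have h1 : (cmAbs (f + g) - cmAbs (f - g)) x = ‖f x + g x‖ - ‖f x - g x‖ := by
      simp [cmAbs, ContinuousMap.sub_apply, ContinuousMap.add_apply]
    rw [h1, Real.norm_eq_abs]
    calc |‖f x + g x‖ - ‖f x - g x‖| ≤ 2 * min ‖f x‖ ‖g x‖ := abs_norm_addsub _ _
      _ ≤ 2 * ε := by have := hming x; linarith
  -- Step 6: points where f, g attain norm one
  obtain ⟨x0, hx0⟩ := norm_eq_max f
  rw [hfnorm] at hx0
  obtain ⟨x1, hx1⟩ := norm_eq_max g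
  rw [hgnorm] at hx1
  have hgx0 : ‖g x0‖ ≤ ε := by
    have := hming x0
    rcases min_cases ‖f x0‖ ‖g x0‖ with ⟨he, hc⟩ | ⟨he, hc⟩
    · rw [he, hx0] at this
      linarith
    · rwa [he] at this
  have hfx1 : ‖f x1‖ ≤ ε := by
    have := hming x1
    rcases min_cases ‖f x1‖ ‖g x1‖ with ⟨he, hc⟩ | ⟨he, hc⟩
    · rwa [he] at this
    · rw [he, hx1] at this
      linarith
  -- Step 7: lower bound on sprInf (f+g) (f-g)
  haveI : Nonempty {c : 𝕜 // ‖c‖ = 1} := ⟨⟨1, norm_one⟩⟩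
  have hlow : (1 : ℝ) - 2 * ε ≤ sprInf (f + g) (f - g) := by
    apply le_ciInf
    rintro ⟨l, hl⟩
    have hval : ∀ x : KK, ((f + g) - (l : 𝕜) • (f - g)) x = (1 - l) * f x + (1 + l) * g x := by
      intro x
      simp only [ContinuousMap.sub_apply, ContinuousMap.add_apply, ContinuousMap.smul_apply,
        _root_.smul_eq_mul]
      ring
    have hnl1 : ‖(1 : 𝕜) - l‖ ≤ 2 := by
      calc ‖(1:𝕜) - l‖ ≤ ‖(1:𝕜)‖ + ‖l‖ := norm_sub_le _ _
        _ = 2 := by rw [norm_one, hl]; norm_num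
    have hnl2 : ‖(1 : 𝕜) + l‖ ≤ 2 := by
      calc ‖(1:𝕜) + l‖ ≤ ‖(1:𝕜)‖ + ‖l‖ := norm_add_le _ _
        _ = 2 := by rw [norm_one, hl]; norm_num
    have hsum : (2:ℝ) ≤ ‖(1:𝕜) - l‖ + ‖(1:𝕜) + l‖ := by
      have h2 : ((1:𝕜) - l) + ((1:𝕜) + l) = 2 := by ring
      have h3 := norm_add_le ((1:𝕜) - l) ((1:𝕜) + l)
      rw [h2] at h3
      have h4 : ‖(2:𝕜)‖ = 2 := by
        rw [show ((2:𝕜)) = ((2:ℝ) : 𝕜) by push_cast; ring, RCLike.norm_ofReal]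
        norm_num
      linarith
    rcases le_total ‖(1:𝕜) - l‖ ‖(1:𝕜) + l‖ with hc | hc
    · -- use x1 : ‖1+l‖ ≥ 1
      have h1l : (1:ℝ) ≤ ‖(1:𝕜) + l‖ := by linarith
      calc (1:ℝ) - 2 * ε ≤ ‖(1 + l) * g x1‖ - ‖(1 - l) * f x1‖ := by
            rw [norm_mul, norm_mul, hx1, mul_one]
            have : ‖(1:𝕜) - l‖ * ‖f x1‖ ≤ 2 * ε := by
              have := norm_nonneg (f x1)
              calc ‖(1:𝕜) - l‖ * ‖f x1‖ ≤ 2 * ‖f x1‖ := by gcongr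
                _ ≤ 2 * ε := by linarith
            linarith
        _ ≤ ‖(1 - l) * f x1 + (1 + l) * g x1‖ := by
            have := norm_add_le ((1 - l) * f x1 + (1 + l) * g x1) (-((1 - l) * f x1))
            simp only [add_neg_cancel_comm] at this
            rw [norm_neg] at this
            linarith
        _ = ‖((f + g) - (l : 𝕜) • (f - g)) x1‖ := by rw [hval x1]
        _ ≤ ‖(f + g) - (l : 𝕜) • (f - g)‖ := ContinuousMap.norm_coe_le_norm _ _
    · -- use x0 : ‖1-l‖ ≥ 1
      have h1l : (1:ℝ) ≤ ‖(1:𝕜) - l‖ := by linarith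
      calc (1:ℝ) - 2 * ε ≤ ‖(1 - l) * f x0‖ - ‖(1 + l) * g x0‖ := by
            rw [norm_mul, norm_mul, hx0, mul_one]
            have : ‖(1:𝕜) + l‖ * ‖g x0‖ ≤ 2 * ε := by
              have := norm_nonneg (g x0)
              calc ‖(1:𝕜) + l‖ * ‖g x0‖ ≤ 2 * ‖g x0‖ := by gcongr
                _ ≤ 2 * ε := by linarith
            linarith
        _ ≤ ‖(1 - l) * f x0 + (1 + l) * g x0‖ := by
            have := norm_add_le ((1 - l) * f x0 + (1 + l) * g x0) (-((1 + l) * g x0))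
            simp only [add_neg_cancel_right] at this
            rw [norm_neg] at this
            linarith
        _ = ‖((f + g) - (l : 𝕜) • (f - g)) x0‖ := by rw [hval x0]
        _ ≤ ‖(f + g) - (l : 𝕜) • (f - g)‖ := ContinuousMap.norm_coe_le_norm _ _
  -- Step 8: contradiction with SPR
  have hupper := hspr (f + g) (E.add_mem hfE hgE) (f - g) (E.sub_mem hfE hgE)
  have h9 : C * ‖cmAbs (f + g) - cmAbs (f - g)‖ ≤ C * (2 * ε) := by
    apply mul_le_mul_of_nonneg_left hub (le_of_lt hC0)
  have h10 : C * (2 * ε) = 1/4 := by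
    rw [hεdef]
    field_simp
    ring
  have h11 : 2 * ε ≤ 1/4 := by linarith
  linarith


-- clopen facts

lemma isClopen_eqnat (k : ℕ) : IsClopen {x : KK | (x : Ordinal) = (k : ℕ)} := by
  have h : {x : KK | (x : Ordinal) = (k : ℕ)} = Subtype.val ⁻¹' {(k : Ordinal)} := rfl
  rw [h]
  refine IsClopen.preimage ⟨isClosed_singleton, ?_⟩ continuous_subtype_val
  rw [Ordinal.isOpen_singleton_iff]
  intro hlim
  exact absurd (Ordinal.omega0_le_of_isSuccLimit hlim) (not_le.2 (Ordinal.nat_lt_omega0 k))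

lemma isClopen_ltnat (k : ℕ) : IsClopen {x : KK | (x : Ordinal) < (k : ℕ)} := by
  have h : {x : KK | (x : Ordinal) < (k : ℕ)} = Subtype.val ⁻¹' (Set.Iio (k : Ordinal)) := rfl
  rw [h]
  refine IsClopen.preimage ⟨?_, isOpen_Iio⟩ continuous_subtype_val
  rw [← isOpen_compl_iff]
  have h2 : (Set.Iio (k : Ordinal))ᶜ = Set.Ici (k : Ordinal) := by
    ext o; simp [not_lt]
  rw [h2]
  cases k with
  | zero =>
      have : Set.Ici ((0:ℕ) : Ordinal) = Set.univ := by
        ext o; simpa using Ordinal.zero_le o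
      rw [this]; exact isOpen_univ
  | succ m =>
      have : Set.Ici ((m+1 : ℕ) : Ordinal) = Set.Ioi (m : Ordinal) := by
        ext o
        have hc : ((m+1 : ℕ) : Ordinal.{0}) = (m : Ordinal.{0}) + 1 := by push_cast; ring
        simp only [Set.mem_Ici, Set.mem_Ioi]
        rw [hc, Ordinal.add_one_eq_succ, Order.succ_le_iff]
      rw [this]; exact isOpen_Ioi

lemma continuous_clopen_ite {X : Type*} [TopologicalSpace X] {𝕜 : Type*} [RCLike 𝕜]
    {p : X → Prop} [DecidablePred p] (h : IsClopen {x | p x}) (A B : 𝕜) :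
    Continuous fun x => if p x then A else B := by
  refine Continuous.if ?_ continuous_const continuous_const
  intro x hx
  have h1 : frontier {x | p x} = ∅ := by
    rw [frontier, h.isClosed.closure_eq, h.isOpen.interior_eq, Set.diff_self]
  rw [h1] at hx
  exact absurd hx (Set.notMem_empty x)

variable {𝕜 : Type*} [RCLike 𝕜]

def cc (m n : ℕ) : 𝕜 := if m < n then RCLike.I else 1

lemma norm_I_le : ‖(RCLike.I : 𝕜)‖ ≤ 1 := by
  rcases RCLike.I_mul_I_ax (K := 𝕜) with h | h
  · rw [h, norm_zero]; norm_num
  · have h2 : ‖(RCLike.I : 𝕜)‖ * ‖(RCLike.I : 𝕜)‖ = 1 := by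
      rw [← norm_mul, h, norm_neg, norm_one]
    nlinarith [norm_nonneg (RCLike.I : 𝕜)]

lemma norm_cc_le (m n : ℕ) : ‖(cc m n : 𝕜)‖ ≤ 1 := by
  unfold cc
  split
  · exact norm_I_le
  · rw [norm_one]

def gk (k : ℕ) : C(KK, 𝕜) :=
  ⟨fun x => if (x : Ordinal) = (k : ℕ) then 1 else 0,
    continuous_clopen_ite (isClopen_eqnat k) 1 0⟩

def hk (k : ℕ) : C(KK, 𝕜) :=
  ⟨fun x => if (x : Ordinal) < (k : ℕ) then RCLike.I else 1,
    continuous_clopen_ite (isClopen_ltnat k) RCLike.I 1⟩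

def Fk (k : ℕ) : C(KK × KK, 𝕜) :=
  (gk k).comp ⟨Prod.fst, continuous_fst⟩ +
    ((hk k).comp ⟨Prod.fst, continuous_fst⟩) * ((gk k).comp ⟨Prod.snd, continuous_snd⟩)

def Esub : Submodule 𝕜 C(KK × KK, 𝕜) where
  carrier := {F | (∀ m n : ℕ, F (pn m, pn n) = F (pn m, pom) + cc m n * F (pn n, pom)) ∧
      (∀ n : ℕ, F (pom, pn n) = F (pn n, pom)) ∧ F (pom, pom) = 0}
  add_mem' := by
    intro a b ha hb
    refine ⟨fun m n => ?_, fun n => ?_, ?_⟩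
    · simp only [ContinuousMap.add_apply, ha.1 m n, hb.1 m n]; ring
    · simp only [ContinuousMap.add_apply, ha.2.1 n, hb.2.1 n]
    · simp only [ContinuousMap.add_apply, ha.2.2, hb.2.2, add_zero]
  zero_mem' := by
    refine ⟨fun m n => ?_, fun n => ?_, ?_⟩ <;> simp
  smul_mem' := by
    intro c a ha
    refine ⟨fun m n => ?_, fun n => ?_, ?_⟩
    · simp only [ContinuousMap.smul_apply, ha.1 m n, _root_.smul_eq_mul]; ring
    · simp only [ContinuousMap.smul_apply, ha.2.1 n]
    · simp only [ContinuousMap.smul_apply, ha.2.2, smul_zero]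

lemma isClosed_Esub : IsClosed ((Esub (𝕜 := 𝕜)) : Set C(KK × KK, 𝕜)) := by
  have h : ((Esub (𝕜 := 𝕜)) : Set C(KK × KK, 𝕜)) =
      (⋂ m : ℕ, ⋂ n : ℕ,
        {F : C(KK × KK, 𝕜) | F (pn m, pn n) = F (pn m, pom) + cc m n * F (pn n, pom)}) ∩
      ((⋂ n : ℕ, {F : C(KK × KK, 𝕜) | F (pom, pn n) = F (pn n, pom)}) ∩
        {F : C(KK × KK, 𝕜) | F (pom, pom) = 0}) := by
    ext F
    simp only [Set.mem_inter_iff, Set.mem_iInter, Set.mem_setOf_eq]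
    rfl
  rw [h]
  have hev : ∀ z : KK × KK, Continuous (fun F : C(KK × KK, 𝕜) => F z) :=
    fun z => continuous_eval_const z
  refine IsClosed.inter ?_ (IsClosed.inter ?_ ?_)
  · exact isClosed_iInter fun m => isClosed_iInter fun n =>
      isClosed_eq (hev _) (((hev _)).add (continuous_const.mul (hev _)))
  · exact isClosed_iInter fun n => isClosed_eq (hev _) (hev _)
  · exact isClosed_eq (hev _) continuous_const

lemma gk_pn (k n : ℕ) : gk (𝕜 := 𝕜) k (pn n) = if n = k then 1 else 0 := by
  simp only [gk, ContinuousMap.coe_mk, pn]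
  congr 1
  simp [Nat.cast_inj]

lemma gk_pom (k : ℕ) : gk (𝕜 := 𝕜) k pom = 0 := by
  simp only [gk, ContinuousMap.coe_mk, pom]
  rw [if_neg]
  exact (Ordinal.nat_lt_omega0 k).ne'

lemma hk_pn (k n : ℕ) : hk (𝕜 := 𝕜) k (pn n) = if n < k then RCLike.I else 1 := by
  simp only [hk, ContinuousMap.coe_mk, pn]
  congr 1
  simp [Nat.cast_lt]

lemma hk_pom (k : ℕ) : hk (𝕜 := 𝕜) k pom = 1 := by
  simp only [hk, ContinuousMap.coe_mk, pom]
  rw [if_neg]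
  exact not_lt.2 (Ordinal.nat_lt_omega0 k).le

lemma Fk_apply (k : ℕ) (x y : KK) : Fk (𝕜 := 𝕜) k (x, y) = gk k x + hk k x * gk k y := rfl

lemma Fk_mem (k : ℕ) : Fk (𝕜 := 𝕜) k ∈ Esub (𝕜 := 𝕜) := by
  refine ⟨fun m n => ?_, fun n => ?_, ?_⟩
  · simp only [Fk_apply, gk_pn, gk_pom, hk_pn, hk_pom, mul_zero, add_zero, mul_one]
    by_cases hn : n = k
    · subst hn
      by_cases hm : m = n <;> by_cases hmn : m < n <;>
        simp [hm, hmn, cc, hk_pn] <;> ring_nf <;> simp_all <;> omega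
    · simp [hn, cc]
  · simp only [Fk_apply, gk_pn, gk_pom, hk_pn, hk_pom, mul_zero, add_zero, mul_one,
      zero_add, one_mul]
  · simp only [Fk_apply, gk_pom, hk_pom, mul_zero, add_zero]

def evalEdge : C(KK × KK, 𝕜) →ₗ[𝕜] (ℕ → 𝕜) where
  toFun F := fun n => F (pn n, pom)
  map_add' _ _ := rfl
  map_smul' _ _ := rfl

lemma Fk_edge (k : ℕ) : evalEdge (Fk (𝕜 := 𝕜) k) = fun n => if n = k then 1 else 0 := by
  funext n
  simp only [evalEdge, LinearMap.coe_mk, AddHom.coe_mk, Fk_apply, gk_pn, gk_pom, mul_zero,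
    add_zero]

lemma linearIndependent_single_fun :
    LinearIndependent 𝕜 (fun k : ℕ => (fun n => if n = k then 1 else 0 : ℕ → 𝕜)) := by
  have h1 : LinearIndependent 𝕜 (fun k : ℕ => Finsupp.single k (1 : 𝕜)) :=
    (Finsupp.basisSingleOne (R := 𝕜)).linearIndependent
  have h2 := h1.map' (Finsupp.lcoeFun (R := 𝕜) (M := 𝕜) (α := ℕ))
    (LinearMap.ker_eq_bot.2 (by exact DFunLike.coe_injective))
  convert h2 using 1
  funext k
  funext n
  simp [Finsupp.lcoeFun, Finsupp.single_apply, eq_comm]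
  all_goals rfl

lemma not_finiteDimensional_Esub : ¬ FiniteDimensional 𝕜 (Esub (𝕜 := 𝕜)) := by
  intro hfd
  have hli : LinearIndependent 𝕜 (fun k : ℕ => (⟨Fk k, Fk_mem k⟩ : Esub (𝕜 := 𝕜))) := by
    have hcomp : LinearIndependent 𝕜
        (fun k : ℕ => evalEdge ((Esub (𝕜 := 𝕜)).subtype ⟨Fk k, Fk_mem k⟩)) := by
      have he : (fun k : ℕ => evalEdge ((Esub (𝕜 := 𝕜)).subtype ⟨Fk k, Fk_mem k⟩)) =
          (fun k : ℕ => (fun n => if n = k then 1 else 0 : ℕ → 𝕜)) := by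
        funext k
        exact Fk_edge k
      rw [he]
      exact linearIndependent_single_fun
    exact (hcomp.of_comp (evalEdge.comp (Esub (𝕜 := 𝕜)).subtype))
  have := hli.finite
  exact not_finite ℕ

lemma sq_diff_est {s t ε M : ℝ} (hs0 : 0 ≤ s) (ht0 : 0 ≤ t) (hs : s ≤ M) (ht : t ≤ M)
    (h : |s - t| ≤ ε) : |s^2 - t^2| ≤ 2 * M * ε := by
  have h2 : s^2 - t^2 = (s - t) * (s + t) := by ring
  rw [h2, abs_mul]
  have h3 : |s + t| ≤ 2 * M := by rw [abs_of_nonneg (by linarith)]; linarith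
  calc |s - t| * |s + t| ≤ ε * (2 * M) :=
        mul_le_mul h h3 (abs_nonneg _) (le_trans (abs_nonneg _) h)
    _ = 2 * M * ε := by ring

lemma norm_add_mul_sq (p q c : 𝕜) :
    ‖p + c*q‖^2 = ‖p‖^2 + ‖c‖^2*‖q‖^2 + 2 * re (c * ((starRingEnd 𝕜) p * q)) := by
  have h := norm_add_sq (𝕜 := 𝕜) (E := 𝕜) p (c*q)
  rw [RCLike.inner_apply] at h
  have h2 : c * q * (starRingEnd 𝕜) p = c * ((starRingEnd 𝕜) p * q) := by ring
  rw [h2] at h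
  rw [h, norm_mul]
  ring

lemma cross_est {x y u v c : 𝕜} {ε M : ℝ} (hc : ‖c‖ ≤ 1)
    (hx : ‖x‖ ≤ M) (hy : ‖y‖ ≤ M) (hu : ‖u‖ ≤ M) (hv : ‖v‖ ≤ M)
    (hxu : |‖x‖ - ‖u‖| ≤ ε) (hyv : |‖y‖ - ‖v‖| ≤ ε)
    (hm : |‖x + c*y‖ - ‖u + c*v‖| ≤ ε) :
    |re (c * ((starRingEnd 𝕜) x * y)) - re (c * ((starRingEnd 𝕜) u * v))| ≤ 4 * M * ε := by
  have hε0 : 0 ≤ ε := le_trans (abs_nonneg _) hxu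
  have hM0 : 0 ≤ M := le_trans (norm_nonneg x) hx
  have hbxy : ‖x + c*y‖ ≤ 2*M := by
    refine le_trans (norm_add_le _ _) ?_
    rw [norm_mul]
    have : ‖c‖ * ‖y‖ ≤ 1 * M := mul_le_mul hc hy (norm_nonneg _) one_pos.le
    linarith
  have hbuv : ‖u + c*v‖ ≤ 2*M := by
    refine le_trans (norm_add_le _ _) ?_
    rw [norm_mul]
    have : ‖c‖ * ‖v‖ ≤ 1 * M := mul_le_mul hc hv (norm_nonneg _) one_pos.le
    linarith
  have h1 : |‖x + c*y‖^2 - ‖u + c*v‖^2| ≤ 2 * (2*M) * ε :=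
    sq_diff_est (norm_nonneg _) (norm_nonneg _) hbxy hbuv hm
  have h2 : |‖x‖^2 - ‖u‖^2| ≤ 2*M*ε :=
    sq_diff_est (norm_nonneg _) (norm_nonneg _) hx hu hxu
  have h3 : |‖y‖^2 - ‖v‖^2| ≤ 2*M*ε :=
    sq_diff_est (norm_nonneg _) (norm_nonneg _) hy hv hyv
  have hcsq : ‖c‖^2 ≤ 1 := by nlinarith [norm_nonneg c]
  have h3' := abs_le.1 h3
  have h4a : ‖c‖^2*(‖y‖^2 - ‖v‖^2) ≤ 2*M*ε := by
    nlinarith [sq_nonneg ‖c‖, h3'.1, h3'.2, hε0, hM0]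
  have h4b : -(2*M*ε) ≤ ‖c‖^2*(‖y‖^2 - ‖v‖^2) := by
    nlinarith [sq_nonneg ‖c‖, h3'.1, h3'.2, hε0, hM0]
  have e1 := norm_add_mul_sq x y c
  have e2 := norm_add_mul_sq u v c
  rw [abs_le] at h1 h2 ⊢
  constructor
  · nlinarith [h1.1, h2.2, h4a, h4b, e1, e2]
  · nlinarith [h1.2, h2.1, h4a, h4b, e1, e2]

lemma norm_le_of_mem {H : C(KK × KK, 𝕜)} (hH : H ∈ Esub (𝕜 := 𝕜)) {S : ℝ} (hS : 0 ≤ S)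
    (h : ∀ n : ℕ, ‖H (pn n, pom)‖ ≤ S) : ‖H‖ ≤ 2 * S := by
  rw [ContinuousMap.norm_le _ (by linarith)]
  rintro ⟨x, y⟩
  rcases classify x with rfl | ⟨m, rfl⟩ <;> rcases classify y with rfl | ⟨n, rfl⟩
  · rw [hH.2.2, norm_zero]; linarith
  · rw [hH.2.1 n]; have := h n; linarith
  · have := h m; linarith
  · rw [hH.1 m n]
    have hc := norm_cc_le (𝕜 := 𝕜) m n
    calc ‖H (pn m, pom) + cc m n * H (pn n, pom)‖
        ≤ ‖H (pn m, pom)‖ + ‖(cc m n : 𝕜)‖ * ‖H (pn n, pom)‖ := by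
          refine le_trans (norm_add_le _ _) ?_
          rw [norm_mul]
      _ ≤ S + 1 * S := by
          have h1 := h m
          have h2 := h n
          have h3 : ‖(cc m n : 𝕜)‖ * ‖H (pn n, pom)‖ ≤ 1 * S :=
            mul_le_mul hc h2 (norm_nonneg _) one_pos.le
          linarith
      _ = 2 * S := by ring

lemma abs_im_le_of_re_I_mul {z : 𝕜} {t : ℝ} (h : |re (RCLike.I * z)| ≤ t) :
    |im z| ≤ t := by
  rcases RCLike.I_mul_I_ax (K := 𝕜) with h0 | h1
  · have hz := RCLike.re_add_im z
    rw [h0, mul_zero, add_zero] at hz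
    have him : im z = 0 := by rw [← hz, RCLike.ofReal_im]
    rw [him, abs_zero]
    exact le_trans (abs_nonneg _) h
  · have hII : im (RCLike.I : 𝕜) * im (RCLike.I : 𝕜) = 1 := by
      have h2 := congrArg re h1
      rw [RCLike.mul_re, RCLike.I_re] at h2
      simp only [zero_mul, zero_sub, map_neg, RCLike.one_re] at h2
      linarith
    have habs1 : |im (RCLike.I : 𝕜)| = 1 := by
      have h3 : |im (RCLike.I : 𝕜)| * |im (RCLike.I : 𝕜)| = 1 := by
        rw [← abs_mul, hII, abs_one]
      rcases mul_self_eq_one_iff.1 h3 with h4 | h4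
      · exact h4
      · have h5 := abs_nonneg (im (RCLike.I : 𝕜))
        rw [h4] at h5
        linarith
    have h5 : |re (RCLike.I * z)| = |im z| := by
      rw [RCLike.mul_re, RCLike.I_re, zero_mul, _root_.zero_sub, abs_neg, abs_mul, habs1, one_mul]
    rwa [h5] at h

theorem doesCSPR_Esub : DoesCSPR (Esub (𝕜 := 𝕜)) 100 := by
  intro F hF G hG
  set ε := ‖cmAbs F - cmAbs G‖ with hεdef
  have hε0 : (0:ℝ) ≤ ε := norm_nonneg _
  have meas : ∀ z : KK × KK, |‖F z‖ - ‖G z‖| ≤ ε := by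
    intro z
    have h1 := ContinuousMap.norm_coe_le_norm (cmAbs F - cmAbs G) z
    have h2 : (cmAbs F - cmAbs G) z = ‖F z‖ - ‖G z‖ := rfl
    rw [h2, Real.norm_eq_abs] at h1
    exact h1
  have main : ∃ l : 𝕜, ‖l‖ = 1 ∧
      ∀ n : ℕ, ‖F (pn n, pom) - l * G (pn n, pom)‖ ≤ 18 * ε := by
    set a : ℕ → 𝕜 := fun n => F (pn n, pom) with ha
    set b : ℕ → 𝕜 := fun n => G (pn n, pom) with hb
    have habs : ∀ n, |‖a n‖ - ‖b n‖| ≤ ε := fun n => meas (pn n, pom)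
    by_cases hcase : ∀ n, ‖a n‖ ≤ 4*ε
    · refine ⟨1, norm_one, fun n => ?_⟩
      have h1 := abs_le.1 (habs n)
      have h2 : ‖a n - 1 * b n‖ ≤ ‖a n‖ + ‖b n‖ := by
        rw [one_mul]; exact norm_sub_le _ _
      have h3 := hcase n
      linarith [h1.1, h1.2]
    · push_neg at hcase
      obtain ⟨n1, hn1⟩ := hcase
      have hatend : Tendsto (fun n => ‖a n‖) atTop (𝓝 0) := by
        have h1 : Tendsto (fun n : ℕ => ((pn n, pom) : KK × KK)) atTop (𝓝 (pom, pom)) :=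
          tendsto_pn.prodMk_nhds tendsto_const_nhds
        have h2 := (F.continuous.tendsto (pom, pom)).comp h1
        rw [hF.2.2] at h2
        simpa [ha] using h2.norm
      have h0n1 : (0:ℝ) < ‖a n1‖ := lt_of_le_of_lt (by positivity) hn1
      obtain ⟨N, hN⟩ := (hatend.eventually (eventually_lt_nhds h0n1)).exists_forall_of_atTop
      obtain ⟨m0, hm0s, hm0max⟩ := (insert n1 (Finset.range (N+1))).exists_max_image
        (fun n => ‖a n‖) ⟨n1, Finset.mem_insert_self _ _⟩
      have hAmax : ∀ n, ‖a n‖ ≤ ‖a m0‖ := by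
        intro n
        rcases le_or_gt n N with h | h
        · exact hm0max n (Finset.mem_insert_of_mem (Finset.mem_range.2 (Nat.lt_succ_of_le h)))
        · exact le_trans (hN n h.le).le (hm0max n1 (Finset.mem_insert_self _ _))
      have hA : 4*ε < ‖a m0‖ := lt_of_lt_of_le hn1 (hm0max n1 (Finset.mem_insert_self _ _))
      set x := a m0 with hx
      set u := b m0 with hu
      have hA0 : (0:ℝ) < ‖x‖ := lt_of_le_of_lt (by positivity) hA
      have hu_low : ‖x‖ - ε ≤ ‖u‖ := by
        have := abs_le.1 (habs m0); linarith [this.2]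
      have hu_pos : (0:ℝ) < ‖u‖ := by linarith
      have hu_hi : ‖u‖ ≤ ‖x‖ + ε := by
        have := abs_le.1 (habs m0); linarith [this.1]
      set l : 𝕜 := (x * (starRingEnd 𝕜) u) / ((‖x‖ * ‖u‖ : ℝ) : 𝕜) with hldef
      have hden : ((‖x‖ * ‖u‖ : ℝ) : 𝕜) ≠ 0 := by
        rw [Ne, RCLike.ofReal_eq_zero]
        positivity
      have hl : ‖l‖ = 1 := by
        rw [hldef, norm_div, norm_mul, RCLike.norm_conj, RCLike.norm_ofReal,
          abs_of_pos (by positivity)]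
        field_simp
      have hxcoe : ((‖x‖ : ℝ) : 𝕜) ≠ 0 := by rw [Ne, RCLike.ofReal_eq_zero]; positivity
      have hucoe : ((‖u‖ : ℝ) : 𝕜) ≠ 0 := by rw [Ne, RCLike.ofReal_eq_zero]; positivity
      have hkey : (starRingEnd 𝕜) x * l = ((‖x‖/‖u‖ : ℝ) : 𝕜) * (starRingEnd 𝕜) u := by
        rw [hldef, mul_div_assoc', div_eq_iff hden]
        have h1 : (starRingEnd 𝕜) x * (x * (starRingEnd 𝕜) u) =
            ((‖x‖^2 : ℝ) : 𝕜) * (starRingEnd 𝕜) u := by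
          rw [← mul_assoc, RCLike.conj_mul]
          push_cast
          ring
        rw [h1]
        push_cast
        field_simp
      have hlu : l * u = ((‖u‖/‖x‖ : ℝ) : 𝕜) * x := by
        rw [hldef, div_mul_eq_mul_div, div_eq_iff hden]
        have h1 : x * (starRingEnd 𝕜) u * u = x * ((‖u‖^2 : ℝ) : 𝕜) := by
          rw [mul_assoc, RCLike.conj_mul]
          push_cast
          ring
        rw [h1]
        push_cast
        field_simp
      have hxlu : ‖x - l * u‖ ≤ ε := by
        rw [hlu]
        have h1 : x - ((‖u‖/‖x‖ : ℝ) : 𝕜) * x = ((1 - ‖u‖/‖x‖ : ℝ) : 𝕜) * x := by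
          push_cast
          ring
        rw [h1, norm_mul, RCLike.norm_ofReal]
        have h2 : |1 - ‖u‖/‖x‖| * ‖x‖ = |‖x‖ - ‖u‖| := by
          rw [← abs_of_pos hA0, ← abs_mul]
          congr 1
          field_simp
          rw [abs_of_pos hA0]
          ring
        rw [h2]
        exact habs m0
      refine ⟨l, hl, fun n => ?_⟩
      by_cases hn : n = m0
      · subst hn
        exact le_trans hxlu (by linarith)
      · set y := a n with hy
        set v := b n with hv
        set M : ℝ := ‖x‖ + ε with hM
        have hyM : ‖y‖ ≤ M := by have := hAmax n; rw [hM]; linarith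
        have hxM : ‖x‖ ≤ M := by rw [hM]; linarith
        have huM : ‖u‖ ≤ M := by rw [hM]; linarith
        have hvM : ‖v‖ ≤ M := by
          have h1 := abs_le.1 (habs n)
          have := hAmax n
          rw [hM]; linarith [h1.1]
        set w : 𝕜 := (starRingEnd 𝕜) x * y - (starRingEnd 𝕜) u * v with hw
        have hmeas1 : |‖x + cc m0 n * y‖ - ‖u + cc m0 n * v‖| ≤ ε := by
          have h1 := meas (pn m0, pn n)
          rw [hF.1 m0 n, hG.1 m0 n] at h1
          exact h1
        have hmeas2 : |‖y + cc n m0 * x‖ - ‖v + cc n m0 * u‖| ≤ ε := by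
          have h1 := meas (pn n, pn m0)
          rw [hF.1 n m0, hG.1 n m0] at h1
          exact h1
        have r1 : |re ((cc m0 n : 𝕜) * w)| ≤ 4*M*ε := by
          have h1 := cross_est (norm_cc_le m0 n) hxM hyM huM hvM (habs m0) (habs n) hmeas1
          have h2 : re ((cc m0 n : 𝕜) * ((starRingEnd 𝕜) x * y)) -
              re ((cc m0 n : 𝕜) * ((starRingEnd 𝕜) u * v)) = re ((cc m0 n : 𝕜) * w) := by
            rw [← map_sub]
            congr 1
            rw [hw]
            ring
          rwa [h2] at h1
        have r2 : |re ((cc n m0 : 𝕜) * (starRingEnd 𝕜) w)| ≤ 4*M*ε := by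
          have h1 := cross_est (norm_cc_le n m0) hyM hxM hvM huM (habs n) (habs m0) hmeas2
          have h2 : re ((cc n m0 : 𝕜) * ((starRingEnd 𝕜) y * x)) -
              re ((cc n m0 : 𝕜) * ((starRingEnd 𝕜) v * u)) =
              re ((cc n m0 : 𝕜) * (starRingEnd 𝕜) w) := by
            rw [← map_sub]
            congr 1
            rw [hw, map_sub, map_mul, map_mul, RCLike.conj_conj, RCLike.conj_conj]
            ring
          rwa [h2] at h1
        have hMε0 : 0 ≤ 4*M*ε := by
          have : (0:ℝ) ≤ M := le_trans (norm_nonneg x) hxM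
          positivity
        have hrew : |re w| ≤ 4*M*ε ∧ |im w| ≤ 4*M*ε := by
          rcases Nat.lt_or_ge m0 n with ho | ho
          · have hc1 : (cc m0 n : 𝕜) = RCLike.I := if_pos ho
            have hc2 : (cc n m0 : 𝕜) = 1 := if_neg (by omega)
            constructor
            · rw [hc2, one_mul, RCLike.conj_re] at r2
              exact r2
            · rw [hc1] at r1
              exact abs_im_le_of_re_I_mul r1
          · have hne : n < m0 := lt_of_le_of_ne ho hn
            have hc1 : (cc m0 n : 𝕜) = 1 := if_neg (by omega)
            have hc2 : (cc n m0 : 𝕜) = RCLike.I := if_pos hne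
            constructor
            · rw [hc1, one_mul] at r1
              exact r1
            · rw [hc2] at r2
              have h3 := abs_im_le_of_re_I_mul r2
              rwa [RCLike.conj_im, abs_neg] at h3
        have hwn : ‖w‖ ≤ 8*M*ε := by
          conv_lhs => rw [← RCLike.re_add_im w]
          refine le_trans (norm_add_le _ _) ?_
          rw [norm_mul, RCLike.norm_ofReal, RCLike.norm_ofReal]
          have h1 : |im w| * ‖(RCLike.I : 𝕜)‖ ≤ |im w| * 1 :=
            mul_le_mul_of_nonneg_left norm_I_le (abs_nonneg _)
          linarith [hrew.1, hrew.2]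
        have hxw : (starRingEnd 𝕜) x * (y - l * v) =
            w + (((‖u‖ - ‖x‖)/‖u‖ : ℝ) : 𝕜) * ((starRingEnd 𝕜) u * v) := by
          have h1 : (starRingEnd 𝕜) x * (l * v) =
              ((‖x‖/‖u‖ : ℝ) : 𝕜) * ((starRingEnd 𝕜) u * v) := by
            rw [← mul_assoc, hkey]
            ring
          rw [_root_.mul_sub, h1, hw]
          have h2 : ((‖x‖/‖u‖ : ℝ) : 𝕜) = 1 - (((‖u‖ - ‖x‖)/‖u‖ : ℝ) : 𝕜) := by
            rw [← RCLike.ofReal_one, ← RCLike.ofReal_sub]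
            congr 1
            field_simp
            ring
          rw [h2]
          ring
        have hfinal : ‖y - l * v‖ ≤ 18 * ε := by
          have h1 : ‖x‖ * ‖y - l * v‖ = ‖(starRingEnd 𝕜) x * (y - l * v)‖ := by
            rw [norm_mul, RCLike.norm_conj]
          have h2 : ‖(starRingEnd 𝕜) x * (y - l * v)‖ ≤
              8*M*ε + |(‖u‖ - ‖x‖)/‖u‖| * (‖u‖ * ‖v‖) := by
            rw [hxw]
            refine le_trans (norm_add_le _ _) ?_
            rw [norm_mul, RCLike.norm_ofReal, norm_mul, RCLike.norm_conj]
            gcongr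
          have h3 : |(‖u‖ - ‖x‖)/‖u‖| * (‖u‖ * ‖v‖) = |‖u‖ - ‖x‖| * ‖v‖ := by
            rw [abs_div, abs_of_pos hu_pos]
            field_simp
          have h4 : |‖u‖ - ‖x‖| ≤ ε := by
            rw [abs_sub_comm]
            exact habs m0
          have h5 : |‖u‖ - ‖x‖| * ‖v‖ ≤ ε * M :=
            mul_le_mul h4 hvM (norm_nonneg _) hε0
          have h6 : ‖x‖ * ‖y - l * v‖ ≤ 8*M*ε + ε*M := by
            rw [h1]
            calc ‖(starRingEnd 𝕜) x * (y - l * v)‖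
                ≤ 8*M*ε + |(‖u‖ - ‖x‖)/‖u‖| * (‖u‖ * ‖v‖) := h2
              _ = 8*M*ε + |‖u‖ - ‖x‖| * ‖v‖ := by rw [h3]
              _ ≤ 8*M*ε + ε*M := by linarith
          -- M = ‖x‖ + ε, 4ε < ‖x‖, so 9 M ε ≤ 9 (5/4) ‖x‖ ε ≤ ‖x‖ * 18 ε
          have h7 : 8*M*ε + ε*M ≤ ‖x‖ * (18 * ε) := by
            rw [hM]
            nlinarith [hε0, hA0, hA, sq_nonneg ε]
          have h8 : ‖x‖ * ‖y - l * v‖ ≤ ‖x‖ * (18 * ε) := le_trans h6 h7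
          exact le_of_mul_le_mul_left h8 hA0
        exact hfinal
  obtain ⟨l, hl, hbd⟩ := main
  have hmem : F - l • G ∈ Esub (𝕜 := 𝕜) :=
    (Esub (𝕜 := 𝕜)).sub_mem hF ((Esub (𝕜 := 𝕜)).smul_mem l hG)
  have hnorm : ‖F - l • G‖ ≤ 2 * (18 * ε) := by
    refine norm_le_of_mem hmem (by positivity) (fun n => ?_)
    have he : (F - l • G) (pn n, pom) = F (pn n, pom) - l * G (pn n, pom) := by
      simp [ContinuousMap.sub_apply, ContinuousMap.smul_apply, _root_.smul_eq_mul]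
    rw [he]
    exact hbd n
  haveI : Nonempty {c : 𝕜 // ‖c‖ = 1} := ⟨⟨1, norm_one⟩⟩
  have h2 : sprInf F G ≤ ‖F - (l : 𝕜) • G‖ :=
    ciInf_le ⟨0, by rintro r ⟨i, rfl⟩; exact norm_nonneg _⟩ (⟨l, hl⟩ : {c : 𝕜 // ‖c‖ = 1})
  calc sprInf F G ≤ 2*(18*ε) := le_trans h2 hnorm
    _ ≤ 100 * ε := by linarith


end SPRAux
end SPRAuxSection

/-- For `𝕜 ∈ {ℝ, ℂ}`: `C([0, ω])` contains no infinite-dimensional subspace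
doing SPR, whereas `C([0, ω] × [0, ω])` contains an infinite-dimensional closed subspace doing
SPR. -/
theorem SPR_in_product_but_not_in_factor {𝕜 : Type*} [RCLike 𝕜] :
    (∀ E : Submodule 𝕜 C(Set.Icc (0 : Ordinal.{0}) Ordinal.omega0, 𝕜),
      DoesSPR E → FiniteDimensional 𝕜 E) ∧
    ∃ E : Submodule 𝕜
        C(Set.Icc (0 : Ordinal.{0}) Ordinal.omega0 ×
          Set.Icc (0 : Ordinal.{0}) Ordinal.omega0, 𝕜),
      IsClosed (E : Set C(Set.Icc (0 : Ordinal.{0}) Ordinal.omega0 ×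
          Set.Icc (0 : Ordinal.{0}) Ordinal.omega0, 𝕜)) ∧
        ¬FiniteDimensional 𝕜 E ∧ DoesSPR E := by
  constructor
  · intro E hE
    exact SPRAux.part1 E hE
  · exact ⟨SPRAux.Esub, SPRAux.isClosed_Esub, SPRAux.not_finiteDimensional_Esub,
      100, by norm_num, SPRAux.doesCSPR_Esub⟩

end
end
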